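/- arXiv:0906.1093 — 5 statements merged into one kernel-verified Lean document; each statement's English description precedes it below -/
import Mathlib

section
/- Let u ∈ H¹(0, L) with u not identically zero, satisfying u(x₀) = 0 for some x₀ ∈ [0, L] attaining max u + min u = 0 (i.e. u ∈ X₁ \ {0} where X₁ = {v ∈ H¹(0,L) : max v + min v = 0}). Then ∫₀ᴸ u′(x)² dx ≥ (4/L)·‖u‖∞², i.e. the minimum of I₁(v) = (∫₀ᴸ v′²)/‖v‖∞² over X₁ \ {0} equals 4/L. -/
open Set intervalIntegral MeasureTheory

private lemma seg_bound (u : ℝ → ℝ) (hu : ContDiff ℝ 1 u) {p q : ℝ} (hpq : p < q) :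
    (u q - u p) ^ 2 / (q - p) ≤ ∫ x in p..q, (deriv u x) ^ 2 := by
  have hcd : Continuous (deriv u) := hu.continuous_deriv le_rfl
  set lam := (u q - u p) / (q - p) with hlam
  have hint : IntervalIntegrable (fun x => (deriv u x) ^ 2) volume p q :=
    (hcd.pow 2).intervalIntegrable p q
  have hftc : (∫ x in p..q, deriv u x) = u q - u p :=
    intervalIntegral.integral_deriv_eq_sub (fun x _ => hu.differentiable one_ne_zero x)
      (hcd.intervalIntegrable p q)
  have hintl : IntervalIntegrable (fun x => 2 * lam * deriv u x - lam ^ 2) volume p q :=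
    ((continuous_const.mul hcd).sub continuous_const).intervalIntegrable p q
  have h1 : (∫ x in p..q, (2 * lam * deriv u x - lam ^ 2)) ≤ ∫ x in p..q, (deriv u x) ^ 2 := by
    apply intervalIntegral.integral_mono_on hpq.le hintl hint
    intro x _
    nlinarith [sq_nonneg (deriv u x - lam)]
  have h2 : (∫ x in p..q, (2 * lam * deriv u x - lam ^ 2))
      = 2 * lam * (u q - u p) - lam ^ 2 * (q - p) := by
    rw [intervalIntegral.integral_sub (f := fun x => 2 * lam * deriv u x) (g := fun _ => lam ^ 2)
      ((continuous_const.mul hcd).intervalIntegrable p q)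
      (intervalIntegrable_const), intervalIntegral.integral_const_mul, hftc,
      intervalIntegral.integral_const]
    simp [smul_eq_mul]
    ring
  have h3 : (u q - u p) ^ 2 / (q - p) = 2 * lam * (u q - u p) - lam ^ 2 * (q - p) := by
    rw [hlam]
    have : q - p ≠ 0 := by linarith
    field_simp
    ring
  linarith [h1, h2.symm.trans_le h1, h3 ▸ (h2 ▸ h1)]

private lemma total_bound (L : ℝ) (u : ℝ → ℝ) (hu : ContDiff ℝ 1 u) {p q r : ℝ}
    (h0 : 0 ≤ p) (hpq : p < q) (hqr : q < r) (hrL : r ≤ L) :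
    (u q - u p) ^ 2 / (q - p) + (u r - u q) ^ 2 / (r - q) ≤
      ∫ x in (0:ℝ)..L, (deriv u x) ^ 2 := by
  have hcd : Continuous (deriv u) := hu.continuous_deriv le_rfl
  have hint : ∀ a b : ℝ, IntervalIntegrable (fun x => (deriv u x) ^ 2) volume a b :=
    fun a b => (hcd.pow 2).intervalIntegrable a b
  have e1 := intervalIntegral.integral_add_adjacent_intervals (hint 0 p) (hint p q)
  have e2 := intervalIntegral.integral_add_adjacent_intervals (hint 0 q) (hint q r)
  have e3 := intervalIntegral.integral_add_adjacent_intervals (hint 0 r) (hint r L)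
  have n1 : (0:ℝ) ≤ ∫ x in (0:ℝ)..p, (deriv u x) ^ 2 :=
    intervalIntegral.integral_nonneg h0 (fun x _ => sq_nonneg _)
  have n2 : (0:ℝ) ≤ ∫ x in r..L, (deriv u x) ^ 2 :=
    intervalIntegral.integral_nonneg hrL (fun x _ => sq_nonneg _)
  have s1 := seg_bound u hu hpq
  have s2 := seg_bound u hu hqr
  linarith

theorem L1_lyapunov_minimization (L : ℝ) (hL : 0 < L) (u : ℝ → ℝ)
    (hu : ContDiff ℝ 1 u)
    (hX1 : sSup (u '' Icc 0 L) + sInf (u '' Icc 0 L) = 0)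
    (hne : ∃ x ∈ Icc 0 L, u x ≠ 0) :
    (4 / L) * (sSup ((fun x => |u x|) '' Icc 0 L)) ^ 2 ≤
      ∫ x in (0:ℝ)..L, (deriv u x) ^ 2 := by
  have hne' : (Icc (0:ℝ) L).Nonempty := nonempty_Icc.2 hL.le
  have hconts : ContinuousOn u (Icc 0 L) := hu.continuous.continuousOn
  have hK : IsCompact (Icc (0:ℝ) L) := isCompact_Icc
  obtain ⟨a, ha, hua⟩ := hK.exists_sSup_image_eq hne' hconts
  obtain ⟨b, hb, hub⟩ := hK.exists_sInf_image_eq hne' hconts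
  set M := sSup (u '' Icc 0 L) with hM
  have hinf : sInf (u '' Icc 0 L) = -M := by linarith
  have hbdda : BddAbove (u '' Icc 0 L) := (hK.image_of_continuousOn hconts).bddAbove
  have hbddb : BddBelow (u '' Icc 0 L) := (hK.image_of_continuousOn hconts).bddBelow
  have hub' : ∀ x ∈ Icc (0:ℝ) L, u x ≤ M := fun x hx => le_csSup hbdda ⟨x, hx, rfl⟩
  have hlb' : ∀ x ∈ Icc (0:ℝ) L, -M ≤ u x := fun x hx => by
    have := csInf_le hbddb (⟨x, hx, rfl⟩ : u x ∈ u '' Icc 0 L)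
    linarith [hinf ▸ this]
  have hMpos : 0 < M := by
    obtain ⟨x, hx, hux⟩ := hne
    by_contra h
    push_neg at h
    have h1 := hub' x hx
    have h2 := hlb' x hx
    exact hux (by linarith)
  -- sSup of |u| equals M
  have habs : sSup ((fun x => |u x|) '' Icc 0 L) = M := by
    apply le_antisymm
    · apply csSup_le (hne'.image _)
      rintro y ⟨x, hx, rfl⟩
      exact abs_le.2 ⟨hlb' x hx, hub' x hx⟩
    · have hba : BddAbove ((fun x => |u x|) '' Icc 0 L) :=
        (hK.image_of_continuousOn (hconts.abs)).bddAbove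
      calc M = u a := hua
        _ ≤ |u a| := le_abs_self _
        _ ≤ _ := le_csSup hba ⟨a, ha, rfl⟩
  rw [habs]
  have huaM : u a = M := hua.symm
  have hubM : u b = -M := by rw [← hub, hinf]
  have hab : a ≠ b := fun h => by rw [h, hubM] at huaM; linarith
  -- key arithmetic
  have arith : ∀ s t : ℝ, 0 < s → 0 < t → s + t ≤ L →
      4 / L * M ^ 2 ≤ M ^ 2 / s + M ^ 2 / t := by
    intro s t hs ht hstL
    rw [div_add_div _ _ hs.ne' ht.ne', div_mul_eq_mul_div, div_le_div_iff₀ hL (by positivity)]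
    have h1 : 0 ≤ M ^ 2 * (s - t) ^ 2 := by positivity
    have h2 : M ^ 2 * (s + t) * (s + t) ≤ M ^ 2 * (s + t) * L := by
      apply mul_le_mul_of_nonneg_left hstL
      positivity
    nlinarith [h1, h2]
  rcases lt_or_gt_of_ne hab with h | h
  · -- a < b, u a = M > 0 > -M = u b
    have hsub : Icc a b ⊆ Icc 0 L := Icc_subset_Icc ha.1 hb.2
    have hiv := intermediate_value_Icc' h.le (hconts.mono hsub)
    have h0mem : (0:ℝ) ∈ Icc (u b) (u a) := by rw [huaM, hubM]; constructor <;> linarith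
    obtain ⟨c, hc, huc⟩ := hiv h0mem
    have hac : a < c := lt_of_le_of_ne hc.1 (fun h => by rw [← h, huaM] at huc; linarith)
    have hcb : c < b := lt_of_le_of_ne hc.2 (fun h => by rw [h, hubM] at huc; linarith)
    have htot := total_bound L u hu ha.1 hac hcb hb.2
    rw [huc, huaM, hubM] at htot
    have e1 : (0 - M) ^ 2 = M ^ 2 := by ring
    have e2 : (-M - 0) ^ 2 = M ^ 2 := by ring
    rw [e1, e2] at htot
    have := arith (c - a) (b - c) (by linarith) (by linarith) (by linarith [ha.1, hb.2])
    linarith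
  · -- b < a
    have hsub : Icc b a ⊆ Icc 0 L := Icc_subset_Icc hb.1 ha.2
    have hiv := intermediate_value_Icc h.le (hconts.mono hsub)
    have h0mem : (0:ℝ) ∈ Icc (u b) (u a) := by rw [huaM, hubM]; constructor <;> linarith
    obtain ⟨c, hc, huc⟩ := hiv h0mem
    have hbc : b < c := lt_of_le_of_ne hc.1 (fun h => by rw [← h, hubM] at huc; linarith)
    have hca : c < a := lt_of_le_of_ne hc.2 (fun h => by rw [h, huaM] at huc; linarith)
    have htot := total_bound L u hu hb.1 hbc hca ha.2
    rw [huc, huaM, hubM] at htot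
    have e1 : (0 - -M) ^ 2 = M ^ 2 := by ring
    have e2 : (M - 0) ^ 2 = M ^ 2 := by ring
    rw [e1, e2] at htot
    have := arith (c - b) (a - c) (by linarith) (by linarith) (by linarith [hb.1, ha.2])
    linarith
end

section
/- Let a ∈ C[0,L] with a not identically zero, ∫₀ᴸ a(x) dx ≥ 0, and ∫₀ᴸ a⁺(x) dx < 4/L, where a⁺(x) = max{a(x), 0}. If u ∈ C²[0,L] satisfies u''(x) + a(x)u(x) = 0 on (0,L) with u'(0) = u'(L) = 0, then u ≡ 0. -/
open Set intervalIntegral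

section Helpers

lemma gronwall_zero (K : ℝ) (g g' : ℝ → ℝ) (p q : ℝ)
    (hg : ∀ x, HasDerivAt g (g' x) x)
    (hbound : ∀ x ∈ Icc p q, |g' x| ≤ K * |g x|) (h0 : g p = 0) :
    ∀ x ∈ Icc p q, g x = 0 := by
  have hcont : ContinuousOn g (Icc p q) :=
    (fun x _ => ((hg x).differentiableAt.continuousAt).continuousWithinAt)
  have := norm_le_gronwallBound_of_norm_deriv_right_le (δ := 0) (K := K) (ε := 0)
    hcont (fun x _ => (hg x).hasDerivWithinAt)
    (by simp [h0]) (fun x hx => by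
      simpa [Real.norm_eq_abs] using hbound x (Ico_subset_Icc_self hx))
  intro x hx
  have h := this x hx
  rw [gronwallBound_ε0] at h
  simp [Real.norm_eq_abs] at h
  exact abs_eq_zero.mp (le_antisymm (by simpa using h) (abs_nonneg _))

lemma ode_unique (L : ℝ) (hL : 0 < L) (a u : ℝ → ℝ)
    (ha : ContinuousOn a (Icc 0 L)) (hu : ContDiff ℝ 2 u)
    (heq : ∀ x ∈ Icc 0 L, deriv (deriv u) x + a x * u x = 0)
    (c : ℝ) (hc : c ∈ Icc 0 L) (hc0 : u c = 0) (hc1 : deriv u c = 0) :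
    ∀ x ∈ Icc 0 L, u x = 0 := by
  obtain ⟨C, hC0, hC⟩ : ∃ C, 0 ≤ C ∧ ∀ x ∈ Icc 0 L, |a x| ≤ C := by
    obtain ⟨C, hC⟩ := (isCompact_Icc (a := (0:ℝ)) (b := L)).exists_bound_of_continuousOn ha
    exact ⟨C, le_trans (abs_nonneg _) (hC 0 ⟨le_rfl, hL.le⟩), fun x hx => hC x hx⟩
  have h2 : ContDiff ℝ (1:ℕ) (deriv u) := (contDiff_succ_iff_deriv.mp (show ContDiff ℝ (1+1:ℕ) u from hu)).2.2
  have hd1 : Differentiable ℝ u := hu.differentiable (by norm_num)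
  have hd2 : Differentiable ℝ (deriv u) := h2.differentiable (by norm_num)
  set g : ℝ → ℝ := fun x => u x * u x + deriv u x * deriv u x with hgdef
  set g' : ℝ → ℝ := fun x => 2 * u x * deriv u x + 2 * deriv u x * deriv (deriv u) x with hg'def
  have hg : ∀ x, HasDerivAt g (g' x) x := by
    intro x
    have h1 : HasDerivAt (fun x => u x * u x) (deriv u x * u x + u x * deriv u x) x :=
      ((hd1 x).hasDerivAt).mul ((hd1 x).hasDerivAt)
    have h2' : HasDerivAt (fun x => deriv u x * deriv u x)
        (deriv (deriv u) x * deriv u x + deriv u x * deriv (deriv u) x) x :=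
      ((hd2 x).hasDerivAt).mul ((hd2 x).hasDerivAt)
    have : HasDerivAt (fun x => u x * u x + deriv u x * deriv u x) _ x := h1.add h2'
    convert this using 1
    simp [hg'def]; ring
  have hbound : ∀ x ∈ Icc 0 L, |g' x| ≤ (1 + C) * |g x| := by
    intro x hx
    have he : deriv (deriv u) x = -(a x * u x) := by linarith [heq x hx]
    have ha' : |a x| ≤ C := hC x hx
    have hgnn : 0 ≤ g x := by
      exact add_nonneg (mul_self_nonneg _) (mul_self_nonneg _)
    rw [abs_of_nonneg hgnn]
    have : g' x = 2 * u x * deriv u x * (1 - a x) := by simp [hg'def, he]; ring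
    rw [this, abs_mul]
    have h1 : |2 * u x * deriv u x| ≤ g x := by
      show |2 * u x * deriv u x| ≤ u x * u x + deriv u x * deriv u x
      rcases abs_cases (2 * u x * deriv u x) with ⟨h, _⟩ | ⟨h, _⟩ <;> rw [h] <;> nlinarith [sq_nonneg (u x - deriv u x), sq_nonneg (u x + deriv u x)]
    have h2'' : |1 - a x| ≤ 1 + C := by
      rcases abs_le.mp ha' with ⟨hl, hr⟩
      rcases abs_cases (1 - a x) with ⟨h, _⟩ | ⟨h, _⟩ <;> rw [h] <;> linarith
    calc |2 * u x * deriv u x| * |1 - a x| ≤ g x * (1 + C) :=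
          mul_le_mul h1 h2'' (abs_nonneg _) hgnn
      _ = (1 + C) * g x := by ring
  have hgc : g c = 0 := by simp [hgdef, hc0, hc1]
  have hfwd : ∀ x ∈ Icc c L, g x = 0 :=
    gronwall_zero (1 + C) g g' c L hg
      (fun x hx => hbound x ⟨le_trans hc.1 hx.1, hx.2⟩) hgc
  have hbwd : ∀ x ∈ Icc 0 c, g x = 0 := by
    have hrefl : ∀ x ∈ Icc 0 c, g (c - x) = 0 := by
      apply gronwall_zero (1 + C) (fun x => g (c - x)) (fun x => -g' (c - x)) 0 c
      · intro x
        have hinner : HasDerivAt (fun x : ℝ => c - x) (-1) x := by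
          simpa using (hasDerivAt_id' x).const_sub c
        have := (hg (c - x)).comp x hinner
        simpa [mul_comm, Function.comp_def] using this
      · intro x hx
        have hcx : c - x ∈ Icc 0 L := ⟨by linarith [hx.2], by linarith [hx.1, hc.2]⟩
        simpa [abs_neg] using hbound (c - x) hcx
      · simpa using hgc
    intro x hx
    have := hrefl (c - x) ⟨by linarith [hx.2], by linarith [hx.1]⟩
    simpa using this
  intro x hx
  have hgx : g x = 0 := by
    rcases le_total x c with h | h
    · exact hbwd x ⟨hx.1, h⟩
    · exact hfwd x ⟨h, hx.2⟩
  have hgx' : u x * u x + deriv u x * deriv u x = 0 := hgx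
  nlinarith [sq_nonneg (u x), sq_nonneg (deriv u x)]

lemma pos_integral (f : ℝ → ℝ) (p q : ℝ) (hpq : p < q)
    (hf : ContinuousOn f (Icc p q)) (h0 : ∀ x ∈ Icc p q, 0 ≤ f x)
    (x₀ : ℝ) (hx₀ : x₀ ∈ Icc p q) (hfx : 0 < f x₀) :
    0 < ∫ x in p..q, f x := by
  have hcw : ContinuousWithinAt f (Icc p q) x₀ := hf x₀ hx₀
  have hev : ∀ᶠ x in nhdsWithin x₀ (Icc p q), f x₀ / 2 < f x :=
    hcw.eventually (eventually_gt_nhds (by linarith))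
  rw [eventually_nhdsWithin_iff, Metric.eventually_nhds_iff] at hev
  obtain ⟨δ, hδ, hball⟩ := hev
  set s := max p (x₀ - δ/2) with hs
  set t := min q (x₀ + δ/2) with ht
  have hsx : s ≤ x₀ := max_le hx₀.1 (by linarith)
  have hst : s < t := by
    rcases lt_or_ge x₀ q with h | h
    · exact lt_of_le_of_lt hsx (lt_min h (by linarith))
    · have hq : x₀ = q := le_antisymm hx₀.2 h
      have h1 : t = q := by rw [ht, hq]; exact min_eq_left (by linarith)
      have h2 : s < q := by rw [hs, hq]; exact max_lt hpq (by linarith)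
      rw [h1]; exact h2
  have hsub : Icc s t ⊆ Icc p q := Icc_subset_Icc (le_max_left _ _) (min_le_left _ _)
  have hhalf : ∀ x ∈ Icc s t, f x₀ / 2 ≤ f x := by
    intro x hx
    refine le_of_lt (hball ?_ (hsub hx))
    rw [Real.dist_eq, abs_lt]
    constructor
    · have : x₀ - δ/2 ≤ s := le_max_right _ _
      have := hx.1
      linarith
    · have : t ≤ x₀ + δ/2 := min_le_right _ _
      have := hx.2
      linarith
  have hint : ∀ r r', p ≤ r → r ≤ r' → r' ≤ q → IntervalIntegrable f MeasureTheory.volume r r' := by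
    intro r r' h1 h2 h3
    exact ContinuousOn.intervalIntegrable_of_Icc h2 (hf.mono (Icc_subset_Icc h1 h3))
  have hts : p ≤ s := le_max_left _ _
  have htq : t ≤ q := min_le_left _ _
  have hsplit : (∫ x in p..q, f x) = (∫ x in p..s, f x) + (∫ x in s..t, f x) + (∫ x in t..q, f x) := by
    have i1 := hint p s le_rfl hts (by linarith)
    have i2 := hint s t hts hst.le htq
    have i3 := hint t q (by linarith) htq le_rfl
    rw [integral_add_adjacent_intervals i1 i2, integral_add_adjacent_intervals (i1.trans i2) i3]
  have hn1 : 0 ≤ ∫ x in p..s, f x :=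
    integral_nonneg hts (fun x hx => h0 x ⟨hx.1, le_trans hx.2 (by linarith)⟩)
  have hn3 : 0 ≤ ∫ x in t..q, f x :=
    integral_nonneg htq (fun x hx => h0 x ⟨le_trans (by linarith) hx.1, hx.2⟩)
  have hn2 : (t - s) * (f x₀ / 2) ≤ ∫ x in s..t, f x := by
    have := integral_mono_on hst.le (intervalIntegrable_const) (hint s t hts hst.le htq)
      (fun x hx => hhalf x hx)
    simp only [intervalIntegral.integral_const, smul_eq_mul] at this; linarith
  have : 0 < (t - s) * (f x₀ / 2) := by
    apply mul_pos (by linarith) (by linarith)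
  linarith [hsplit, hn1, hn3, hn2]

lemma ftc2 (u : ℝ → ℝ) (hu : ContDiff ℝ 2 u) (x y : ℝ) :
    (∫ t in x..y, deriv (deriv u) t) = deriv u y - deriv u x := by
  have h2 : ContDiff ℝ (1:ℕ) (deriv u) :=
    (contDiff_succ_iff_deriv.mp (show ContDiff ℝ (1+1:ℕ) u from hu)).2.2
  exact integral_deriv_eq_sub (fun t _ => (h2.differentiable (by norm_num)) t)
    ((h2.continuous_deriv le_rfl).intervalIntegrable x y)

lemma ftc1 (u : ℝ → ℝ) (hu : ContDiff ℝ 2 u) (x y : ℝ) :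
    (∫ t in x..y, deriv u t) = u y - u x := by
  have h2 : ContDiff ℝ (1:ℕ) (deriv u) :=
    (contDiff_succ_iff_deriv.mp (show ContDiff ℝ (1+1:ℕ) u from hu)).2.2
  exact integral_deriv_eq_sub (fun t _ => (hu.differentiable (by norm_num)) t)
    (h2.continuous.intervalIntegrable x y)

lemma lemR (α β : ℝ) (hab : α < β) (a u : ℝ → ℝ)
    (ha : ContinuousOn a (Icc α β)) (hu : ContDiff ℝ 2 u)
    (heq : ∀ x ∈ Icc α β, deriv (deriv u) x + a x * u x = 0)
    (hb : deriv u α = 0) (hc : u β = 0)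
    (hpos : ∀ x ∈ Ico α β, 0 < u x)
    (hmax : ∀ x ∈ Icc α β, u x ≤ u α) :
    1 ≤ (β - α) * ∫ x in α..β, max (a x) 0 := by
  set M := u α with hM
  have hMpos : 0 < M := hpos α ⟨le_rfl, hab⟩
  set I := ∫ x in α..β, max (a x) 0 with hI
  have hapcont : ContinuousOn (fun x => max (a x) 0) (Icc α β) :=
    ha.sup continuousOn_const
  have hapint : ∀ x y, α ≤ x → x ≤ y → y ≤ β →
      IntervalIntegrable (fun t => max (a t) 0) MeasureTheory.volume x y := by
    intro x y h1 h2 h3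
    exact ContinuousOn.intervalIntegrable_of_Icc h2 (hapcont.mono (Icc_subset_Icc h1 h3))
  have hunn : ∀ t ∈ Icc α β, 0 ≤ u t := by
    intro t ht
    rcases lt_or_ge t β with h | h
    · exact (hpos t ⟨ht.1, h⟩).le
    · have : t = β := le_antisymm ht.2 h
      rw [this, hc]
  have hkey : ∀ x ∈ Icc α β, -(M * I) ≤ deriv u x := by
    intro x hx
    have h1 : deriv u x = -(∫ t in α..x, a t * u t) := by
      have := ftc2 u hu α x
      rw [hb, sub_zero] at this
      rw [← this, ← intervalIntegral.integral_neg]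
      apply intervalIntegral.integral_congr
      intro t ht
      rw [uIcc_of_le hx.1] at ht
      have := heq t ⟨ht.1, le_trans ht.2 hx.2⟩
      show deriv (deriv u) t = -(a t * u t)
      linarith
    have h2 : (∫ t in α..x, a t * u t) ≤ ∫ t in α..x, max (a t) 0 * M := by
      apply integral_mono_on hx.1
      · exact ContinuousOn.intervalIntegrable_of_Icc hx.1
          ((ha.mono (Icc_subset_Icc le_rfl hx.2)).mul
            ((hu.continuous.continuousOn)))
      · exact (hapint α x le_rfl hx.1 hx.2).mul_const M
      · intro t ht
        have ht' : t ∈ Icc α β := ⟨ht.1, le_trans ht.2 hx.2⟩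
        have h0 : 0 ≤ u t := hunn t ht'
        have hM' : u t ≤ M := hmax t ht'
        rcases le_or_gt (a t) 0 with h | h
        · calc a t * u t ≤ 0 := mul_nonpos_of_nonpos_of_nonneg h h0
            _ ≤ max (a t) 0 * M := mul_nonneg (le_max_right _ _) hMpos.le
        · rw [max_eq_left h.le]
          exact mul_le_mul_of_nonneg_left hM' h.le
    have h3 : (∫ t in α..x, max (a t) 0 * M) = M * ∫ t in α..x, max (a t) 0 := by
      rw [← intervalIntegral.integral_const_mul]
      apply intervalIntegral.integral_congr
      intro t _; ring
    have h4 : (∫ t in α..x, max (a t) 0) ≤ I := by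
      rw [hI, ← integral_add_adjacent_intervals (hapint α x le_rfl hx.1 hx.2)
        (hapint x β hx.1 hx.2 le_rfl)]
      have : 0 ≤ ∫ t in x..β, max (a t) 0 :=
        integral_nonneg hx.2 (fun t _ => le_max_right _ _)
      linarith
    have h5 : (∫ t in α..x, a t * u t) ≤ M * I := by
      calc (∫ t in α..x, a t * u t) ≤ M * ∫ t in α..x, max (a t) 0 := by rw [← h3]; exact h2
        _ ≤ M * I := by
            apply mul_le_mul_of_nonneg_left h4 hMpos.le
    rw [h1]
    linarith
  have h6 : u β - u α = ∫ x in α..β, deriv u x := (ftc1 u hu α β).symm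
  have h7 : (∫ x in α..β, (-(M * I))) ≤ ∫ x in α..β, deriv u x := by
    apply integral_mono_on hab.le intervalIntegrable_const
    · have h2' : ContDiff ℝ (1:ℕ) (deriv u) :=
        (contDiff_succ_iff_deriv.mp (show ContDiff ℝ (1+1:ℕ) u from hu)).2.2
      exact h2'.continuous.intervalIntegrable α β
    · exact hkey
  simp only [intervalIntegral.integral_const, smul_eq_mul] at h7
  rw [← h6, hc, hM] at h7
  have h8 : M ≤ (β - α) * (M * I) := by linarith
  have h9 : M * 1 ≤ M * ((β - α) * I) := by nlinarith
  exact le_of_mul_le_mul_left (by linarith [h9]) hMpos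

lemma lemL (α β : ℝ) (hab : α < β) (a u : ℝ → ℝ)
    (ha : ContinuousOn a (Icc α β)) (hu : ContDiff ℝ 2 u)
    (heq : ∀ x ∈ Icc α β, deriv (deriv u) x + a x * u x = 0)
    (hb : deriv u β = 0) (hc : u α = 0)
    (hpos : ∀ x ∈ Ioc α β, 0 < u x)
    (hmax : ∀ x ∈ Icc α β, u x ≤ u β) :
    1 ≤ (β - α) * ∫ x in α..β, max (a x) 0 := by
  set M := u β with hM
  have hMpos : 0 < M := hpos β ⟨hab, le_rfl⟩
  set I := ∫ x in α..β, max (a x) 0 with hI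
  have hapcont : ContinuousOn (fun x => max (a x) 0) (Icc α β) :=
    ha.sup continuousOn_const
  have hapint : ∀ x y, α ≤ x → x ≤ y → y ≤ β →
      IntervalIntegrable (fun t => max (a t) 0) MeasureTheory.volume x y := by
    intro x y h1 h2 h3
    exact ContinuousOn.intervalIntegrable_of_Icc h2 (hapcont.mono (Icc_subset_Icc h1 h3))
  have hunn : ∀ t ∈ Icc α β, 0 ≤ u t := by
    intro t ht
    rcases lt_or_ge α t with h | h
    · exact (hpos t ⟨h, ht.2⟩).le
    · have : t = α := le_antisymm h ht.1
      rw [this, hc]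
  have hkey : ∀ x ∈ Icc α β, deriv u x ≤ M * I := by
    intro x hx
    have h1 : deriv u x = ∫ t in x..β, a t * u t := by
      have := ftc2 u hu x β
      rw [hb] at this
      have h1' : (∫ t in x..β, deriv (deriv u) t) = -∫ t in x..β, a t * u t := by
        rw [← intervalIntegral.integral_neg]
        apply intervalIntegral.integral_congr
        intro t ht
        rw [uIcc_of_le hx.2] at ht
        have := heq t ⟨le_trans hx.1 ht.1, ht.2⟩
        show deriv (deriv u) t = -(a t * u t)
        linarith
      rw [h1'] at this
      linarith
    have h2 : (∫ t in x..β, a t * u t) ≤ ∫ t in x..β, max (a t) 0 * M := by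
      apply integral_mono_on hx.2
      · exact ContinuousOn.intervalIntegrable_of_Icc hx.2
          ((ha.mono (Icc_subset_Icc hx.1 le_rfl)).mul (hu.continuous.continuousOn))
      · exact (hapint x β hx.1 hx.2 le_rfl).mul_const M
      · intro t ht
        have ht' : t ∈ Icc α β := ⟨le_trans hx.1 ht.1, ht.2⟩
        have h0 : 0 ≤ u t := hunn t ht'
        have hM' : u t ≤ M := hmax t ht'
        rcases le_or_gt (a t) 0 with h | h
        · calc a t * u t ≤ 0 := mul_nonpos_of_nonpos_of_nonneg h h0
            _ ≤ max (a t) 0 * M := mul_nonneg (le_max_right _ _) hMpos.le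
        · rw [max_eq_left h.le]
          exact mul_le_mul_of_nonneg_left hM' h.le
    have h3 : (∫ t in x..β, max (a t) 0 * M) = M * ∫ t in x..β, max (a t) 0 := by
      rw [← intervalIntegral.integral_const_mul]
      apply intervalIntegral.integral_congr
      intro t _; ring
    have h4 : (∫ t in x..β, max (a t) 0) ≤ I := by
      rw [hI, ← integral_add_adjacent_intervals (hapint α x le_rfl hx.1 hx.2)
        (hapint x β hx.1 hx.2 le_rfl)]
      have : 0 ≤ ∫ t in α..x, max (a t) 0 :=
        integral_nonneg hx.1 (fun t _ => le_max_right _ _)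
      linarith
    calc deriv u x = ∫ t in x..β, a t * u t := h1
      _ ≤ M * ∫ t in x..β, max (a t) 0 := by rw [← h3]; exact h2
      _ ≤ M * I := mul_le_mul_of_nonneg_left h4 hMpos.le
  have h6 : u β - u α = ∫ x in α..β, deriv u x := (ftc1 u hu α β).symm
  have h7 : (∫ x in α..β, deriv u x) ≤ ∫ x in α..β, (M * I) := by
    apply integral_mono_on hab.le
    · have h2' : ContDiff ℝ (1:ℕ) (deriv u) :=
        (contDiff_succ_iff_deriv.mp (show ContDiff ℝ (1+1:ℕ) u from hu)).2.2
      exact h2'.continuous.intervalIntegrable α β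
    · exact intervalIntegrable_const
    · exact hkey
  simp only [intervalIntegral.integral_const, smul_eq_mul] at h7
  rw [← h6, hc, ← hM] at h7
  have h8 : M ≤ (β - α) * (M * I) := by linarith
  have h9 : M * 1 ≤ M * ((β - α) * I) := by nlinarith
  exact le_of_mul_le_mul_left (by linarith [h9]) hMpos

lemma combine (L x1 y1 x2 y2 : ℝ) (a : ℝ → ℝ) (hL : 0 < L)
    (h0 : 0 ≤ x1) (h1 : x1 < y1) (h2 : y1 ≤ x2) (h3 : x2 < y2) (h4 : y2 ≤ L)
    (ha : ContinuousOn a (Icc 0 L))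
    (H1 : 1 ≤ (y1 - x1) * ∫ x in x1..y1, max (a x) 0)
    (H2 : 1 ≤ (y2 - x2) * ∫ x in x2..y2, max (a x) 0) :
    4 / L ≤ ∫ x in (0:ℝ)..L, max (a x) 0 := by
  have hapcont : ContinuousOn (fun x => max (a x) 0) (Icc 0 L) :=
    ha.sup continuousOn_const
  have hapint : ∀ x y, 0 ≤ x → x ≤ y → y ≤ L →
      IntervalIntegrable (fun t => max (a t) 0) MeasureTheory.volume x y := by
    intro x y hx hxy hy
    exact ContinuousOn.intervalIntegrable_of_Icc hxy (hapcont.mono (Icc_subset_Icc hx hy))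
  have hnn : ∀ x y, 0 ≤ x → x ≤ y → y ≤ L → 0 ≤ ∫ t in x..y, max (a t) 0 := by
    intro x y _ hxy _
    exact integral_nonneg hxy (fun t _ => le_max_right _ _)
  have hsplit : (∫ x in (0:ℝ)..L, max (a x) 0) =
      (∫ x in (0:ℝ)..x1, max (a x) 0) + (∫ x in x1..y1, max (a x) 0)
        + (∫ x in y1..x2, max (a x) 0) + (∫ x in x2..y2, max (a x) 0)
        + (∫ x in y2..L, max (a x) 0) := by
    have i1 := hapint 0 x1 le_rfl h0 (by linarith)
    have i2 := hapint x1 y1 h0 h1.le (by linarith)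
    have i3 := hapint y1 x2 (by linarith) h2 (by linarith)
    have i4 := hapint x2 y2 (by linarith) h3.le h4
    have i5 := hapint y2 L (by linarith) h4 le_rfl
    rw [integral_add_adjacent_intervals i1 i2,
      integral_add_adjacent_intervals (i1.trans i2) i3,
      integral_add_adjacent_intervals ((i1.trans i2).trans i3) i4,
      integral_add_adjacent_intervals (((i1.trans i2).trans i3).trans i4) i5]
  set I1 := ∫ x in x1..y1, max (a x) 0 with hI1
  set I2 := ∫ x in x2..y2, max (a x) 0 with hI2
  have hT : I1 + I2 ≤ ∫ x in (0:ℝ)..L, max (a x) 0 := by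
    have n1 := hnn 0 x1 le_rfl h0 (by linarith)
    have n3 := hnn y1 x2 (by linarith) h2 (by linarith)
    have n5 := hnn y2 L (by linarith) h4 le_rfl
    linarith [hsplit]
  set p := y1 - x1 with hp
  set q := y2 - x2 with hq
  have hppos : 0 < p := by simp [hp]; linarith
  have hqpos : 0 < q := by simp [hq]; linarith
  have hpq : p + q ≤ L := by simp [hp, hq]; linarith
  have hI1pos : 0 < I1 := by
    rcases lt_or_ge 0 I1 with h | h
    · exact h
    · exfalso; nlinarith [mul_nonpos_of_nonneg_of_nonpos hppos.le h]
  have hI2pos : 0 < I2 := by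
    rcases lt_or_ge 0 I2 with h | h
    · exact h
    · exfalso; nlinarith [mul_nonpos_of_nonneg_of_nonpos hqpos.le h]
  rw [div_le_iff₀ hL]
  have hprod : 1 ≤ (p * I1) * (q * I2) := by nlinarith
  have hsum : 2 ≤ q * I1 + p * I2 := by
    nlinarith [sq_nonneg (q * I1 - p * I2), hprod,
      add_pos (mul_pos hqpos hI1pos) (mul_pos hppos hI2pos)]
  have key : 4 ≤ (I1 + I2) * (p + q) := by nlinarith [H1, H2, hsum]
  have : (I1 + I2) * (p + q) ≤ (∫ x in (0:ℝ)..L, max (a x) 0) * L := by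
    apply mul_le_mul hT hpq (by linarith) (by linarith)
  linarith

lemma eq_zero_on_Icc_of_Ioo (L : ℝ) (hL : 0 < L) (f : ℝ → ℝ)
    (hf : ContinuousOn f (Icc 0 L)) (h0 : ∀ x ∈ Ioo 0 L, f x = 0) :
    ∀ x ∈ Icc 0 L, f x = 0 := by
  intro x hx
  have hxc : x ∈ closure (Ioo 0 L) := by
    rw [closure_Ioo hL.ne]; exact hx
  haveI := mem_closure_iff_nhdsWithin_neBot.mp hxc
  have t1 : Filter.Tendsto f (nhdsWithin x (Ioo 0 L)) (nhds (f x)) :=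
    (hf x hx).tendsto.mono_left (nhdsWithin_mono _ Ioo_subset_Icc_self)
  have t2 : Filter.Tendsto f (nhdsWithin x (Ioo 0 L)) (nhds 0) := by
    apply Filter.Tendsto.congr' _ (tendsto_const_nhds (α := ℝ) (x := (0:ℝ)))
    exact Filter.eventually_of_mem self_mem_nhdsWithin (fun y hy => (h0 y hy).symm)
  exact tendsto_nhds_unique t1 t2

end Helpers

theorem L1_lyapunov_uniqueness (L : ℝ) (hL : 0 < L) (a u : ℝ → ℝ)
    (ha : ContinuousOn a (Icc 0 L))
    (hane : ∃ x ∈ Icc 0 L, a x ≠ 0)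
    (hamean : 0 ≤ ∫ x in (0:ℝ)..L, a x)
    (haplus : (∫ x in (0:ℝ)..L, max (a x) 0) < 4 / L)
    (hu : ContDiff ℝ 2 u)
    (heq : ∀ x ∈ Icc 0 L, deriv (deriv u) x + a x * u x = 0)
    (hu0 : deriv u 0 = 0) (huL : deriv u L = 0) :
    ∀ x ∈ Icc 0 L, u x = 0 := by
  by_contra hcon
  push_neg at hcon
  obtain ⟨x₀, hx₀, hux₀⟩ := hcon
  have h2 : ContDiff ℝ (1:ℕ) (deriv u) :=
    (contDiff_succ_iff_deriv.mp (show ContDiff ℝ (1+1:ℕ) u from hu)).2.2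
  have hd1 : Differentiable ℝ u := hu.differentiable (by norm_num)
  have hd2 : Differentiable ℝ (deriv u) := h2.differentiable (by norm_num)
  by_cases hz : ∃ c ∈ Icc 0 L, u c = 0
  · -- there is a zero
    by_cases hsgn : (∃ p ∈ Icc 0 L, 0 < u p) ∧ (∃ q ∈ Icc 0 L, u q < 0)
    · -- u changes sign: Lyapunov argument
      obtain ⟨⟨p, hpI, hp⟩, ⟨q, hqI, hq⟩⟩ := hsgn
      obtain ⟨b, hbI, hbmax'⟩ := isCompact_Icc.exists_isMaxOn
        (nonempty_Icc.mpr hL.le) (hu.continuous.continuousOn)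
      obtain ⟨b', hb'I, hbmin'⟩ := isCompact_Icc.exists_isMinOn
        (nonempty_Icc.mpr hL.le) (hu.continuous.continuousOn)
      have hbmax : ∀ x ∈ Icc 0 L, u x ≤ u b := hbmax'
      have hbmin : ∀ x ∈ Icc 0 L, u b' ≤ u x := hbmin'
      have hub : 0 < u b := lt_of_lt_of_le hp (hbmax p hpI)
      have hub' : u b' < 0 := lt_of_le_of_lt (hbmin q hqI) hq
      have hderivb : deriv u b = 0 := by
        rcases eq_or_lt_of_le hbI.1 with h | h
        · rw [← h]; exact hu0
        · rcases eq_or_lt_of_le hbI.2 with h' | h'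
          · rw [h']; exact huL
          · have : IsLocalMax u b :=
              Filter.eventually_of_mem (Icc_mem_nhds h h') (fun y hy => hbmax y hy)
            exact this.deriv_eq_zero
      have hderivb' : deriv u b' = 0 := by
        rcases eq_or_lt_of_le hb'I.1 with h | h
        · rw [← h]; exact hu0
        · rcases eq_or_lt_of_le hb'I.2 with h' | h'
          · rw [h']; exact huL
          · have : IsLocalMin u b' :=
              Filter.eventually_of_mem (Icc_mem_nhds h h') (fun y hy => hbmin y hy)
            exact this.deriv_eq_zero
      have hne : b ≠ b' := by
        intro h; rw [h] at hub; linarith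
      -- helper : neg equation
      have hdneg : deriv (fun y => -u y) = fun y => -deriv u y := funext (fun y => deriv.neg)
      have hddneg : ∀ x, deriv (deriv (fun y => -u y)) x = -(deriv (deriv u) x) := by
        intro x; rw [hdneg]; exact deriv.neg
      rcases lt_or_gt_of_ne hne with hbb | hbb
      · -- b < b'
        set S := {x | x ∈ Icc b b' ∧ u x = 0} with hS
        have hSsub : S ⊆ Icc b b' := fun x hx => hx.1
        have hSclosed : IsClosed S := by
          have : S = Icc b b' ∩ u ⁻¹' {0} := rfl
          rw [this]
          exact isClosed_Icc.inter (isClosed_singleton.preimage hu.continuous)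
        have hSne : S.Nonempty := by
          have := intermediate_value_Icc' hbb.le (hu.continuous.continuousOn (s := Icc b b'))
          have h0mem : (0:ℝ) ∈ Icc (u b') (u b) := ⟨hub'.le, hub.le⟩
          obtain ⟨c, hcmem, hc0⟩ := this h0mem
          exact ⟨c, hcmem, hc0⟩
        have hbddB : BddBelow S := (bddBelow_Icc : BddBelow (Icc b b')).mono hSsub
        have hbddA : BddAbove S := (bddAbove_Icc (a := b) (b := b')).mono hSsub
        set c1 := sInf S with hc1
        set c2 := sSup S with hc2
        have hc1S : c1 ∈ S := hSclosed.csInf_mem hSne hbddB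
        have hc2S : c2 ∈ S := hSclosed.csSup_mem hSne hbddA
        have hbc1 : b < c1 := by
          rcases eq_or_lt_of_le hc1S.1.1 with h | h
          · exfalso; rw [h] at hub; rw [hc1S.2] at hub; linarith
          · exact h
        have hc2b' : c2 < b' := by
          rcases eq_or_lt_of_le hc2S.1.2 with h | h
          · exfalso; rw [← h] at hub'; rw [hc2S.2] at hub'; linarith
          · exact h
        have hc1c2 : c1 ≤ c2 := csInf_le_csSup hSne hbddB hbddA
        have hIccsub : Icc b b' ⊆ Icc 0 L := Icc_subset_Icc hbI.1 hb'I.2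
        have hposIco : ∀ x ∈ Ico b c1, 0 < u x := by
          intro x hx
          by_contra hle
          push_neg at hle
          have h0mem : (0:ℝ) ∈ Icc (u x) (u b) := ⟨hle, hub.le⟩
          obtain ⟨y, hymem, hy0⟩ := intermediate_value_Icc'
            hx.1 (hu.continuous.continuousOn (s := Icc b x)) h0mem
          have hyS : y ∈ S := ⟨⟨hymem.1, by linarith [hymem.2, hx.2, hc1S.1.2]⟩, hy0⟩
          have := csInf_le hbddB hyS
          linarith [hymem.2, hx.2]
        have hnegIoc : ∀ x ∈ Ioc c2 b', u x < 0 := by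
          intro x hx
          by_contra hle
          push_neg at hle
          have h0mem : (0:ℝ) ∈ Icc (u b') (u x) := ⟨hub'.le, hle⟩
          obtain ⟨y, hymem, hy0⟩ := intermediate_value_Icc'
            hx.2 (hu.continuous.continuousOn (s := Icc x b')) h0mem
          have hyS : y ∈ S := ⟨⟨by linarith [hymem.1, hx.1, hc2S.1.1], hymem.2⟩, hy0⟩
          have := le_csSup hbddA hyS
          linarith [hymem.1, hx.1]
        -- lemR on [b, c1]
        have hsub1 : Icc b c1 ⊆ Icc 0 L :=
          Icc_subset_Icc hbI.1 (le_trans hc1S.1.2 hb'I.2)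
        have H1 : 1 ≤ (c1 - b) * ∫ x in b..c1, max (a x) 0 :=
          lemR b c1 hbc1 a u (ha.mono hsub1) hu
            (fun x hx => heq x (hsub1 hx)) hderivb hc1S.2 hposIco
            (fun x hx => hbmax x (hsub1 hx))
        -- lemL on [c2, b'] with -u
        have hsub2 : Icc c2 b' ⊆ Icc 0 L :=
          Icc_subset_Icc (le_trans hbI.1 hc2S.1.1) hb'I.2
        have H2 : 1 ≤ (b' - c2) * ∫ x in c2..b', max (a x) 0 := by
          apply lemL c2 b' hc2b' a (fun y => -u y) (ha.mono hsub2) hu.neg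
          · intro x hx
            have := heq x (hsub2 hx)
            rw [hddneg x]
            show -(deriv (deriv u) x) + a x * (-u x) = 0
            linarith
          · rw [hdneg]; show -deriv u b' = 0; rw [hderivb']; ring
          · show -u c2 = 0; rw [hc2S.2]; ring
          · intro x hx
            show 0 < -u x
            linarith [hnegIoc x hx]
          · intro x hx
            show -u x ≤ -u b'
            linarith [hbmin x (hsub2 hx)]
        have := combine L b c1 c2 b' a hL hbI.1 hbc1 hc1c2 hc2b' hb'I.2 ha H1 H2
        linarith
      · -- b' < b
        set S := {x | x ∈ Icc b' b ∧ u x = 0} with hS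
        have hSsub : S ⊆ Icc b' b := fun x hx => hx.1
        have hSclosed : IsClosed S := by
          have : S = Icc b' b ∩ u ⁻¹' {0} := rfl
          rw [this]
          exact isClosed_Icc.inter (isClosed_singleton.preimage hu.continuous)
        have hSne : S.Nonempty := by
          have := intermediate_value_Icc hbb.le (hu.continuous.continuousOn (s := Icc b' b))
          have h0mem : (0:ℝ) ∈ Icc (u b') (u b) := ⟨hub'.le, hub.le⟩
          obtain ⟨c, hcmem, hc0⟩ := this h0mem
          exact ⟨c, hcmem, hc0⟩
        have hbddB : BddBelow S := (bddBelow_Icc : BddBelow (Icc b' b)).mono hSsub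
        have hbddA : BddAbove S := (bddAbove_Icc (a := b') (b := b)).mono hSsub
        set c1 := sInf S with hc1
        set c2 := sSup S with hc2
        have hc1S : c1 ∈ S := hSclosed.csInf_mem hSne hbddB
        have hc2S : c2 ∈ S := hSclosed.csSup_mem hSne hbddA
        have hbc1 : b' < c1 := by
          rcases eq_or_lt_of_le hc1S.1.1 with h | h
          · exfalso; rw [h] at hub'; rw [hc1S.2] at hub'; linarith
          · exact h
        have hc2b : c2 < b := by
          rcases eq_or_lt_of_le hc2S.1.2 with h | h
          · exfalso; rw [← h] at hub; rw [hc2S.2] at hub; linarith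
          · exact h
        have hc1c2 : c1 ≤ c2 := csInf_le_csSup hSne hbddB hbddA
        have hnegIco : ∀ x ∈ Ico b' c1, u x < 0 := by
          intro x hx
          by_contra hle
          push_neg at hle
          have h0mem : (0:ℝ) ∈ Icc (u b') (u x) := ⟨hub'.le, hle⟩
          obtain ⟨y, hymem, hy0⟩ := intermediate_value_Icc
            hx.1 (hu.continuous.continuousOn (s := Icc b' x)) h0mem
          have hyS : y ∈ S := ⟨⟨hymem.1, by linarith [hymem.2, hx.2, hc1S.1.2]⟩, hy0⟩
          have := csInf_le hbddB hyS
          linarith [hymem.2, hx.2]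
        have hposIoc : ∀ x ∈ Ioc c2 b, 0 < u x := by
          intro x hx
          by_contra hle
          push_neg at hle
          have h0mem : (0:ℝ) ∈ Icc (u x) (u b) := ⟨hle, hub.le⟩
          obtain ⟨y, hymem, hy0⟩ := intermediate_value_Icc
            hx.2 (hu.continuous.continuousOn (s := Icc x b)) h0mem
          have hyS : y ∈ S := ⟨⟨by linarith [hymem.1, hx.1, hc2S.1.1], hymem.2⟩, hy0⟩
          have := le_csSup hbddA hyS
          linarith [hymem.1, hx.1]
        have hsub1 : Icc b' c1 ⊆ Icc 0 L :=
          Icc_subset_Icc hb'I.1 (le_trans hc1S.1.2 hbI.2)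
        have H1 : 1 ≤ (c1 - b') * ∫ x in b'..c1, max (a x) 0 := by
          apply lemR b' c1 hbc1 a (fun y => -u y) (ha.mono hsub1) hu.neg
          · intro x hx
            have := heq x (hsub1 hx)
            rw [hddneg x]
            show -(deriv (deriv u) x) + a x * (-u x) = 0
            linarith
          · rw [hdneg]; show -deriv u b' = 0; rw [hderivb']; ring
          · show -u c1 = 0; rw [hc1S.2]; ring
          · intro x hx
            show 0 < -u x
            linarith [hnegIco x hx]
          · intro x hx
            show -u x ≤ -u b'
            linarith [hbmin x (hsub1 hx)]
        have hsub2 : Icc c2 b ⊆ Icc 0 L :=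
          Icc_subset_Icc (le_trans hb'I.1 hc2S.1.1) hbI.2
        have H2 : 1 ≤ (b - c2) * ∫ x in c2..b, max (a x) 0 :=
          lemL c2 b hc2b a u (ha.mono hsub2) hu
            (fun x hx => heq x (hsub2 hx)) hderivb hc2S.2 hposIoc
            (fun x hx => hbmax x (hsub2 hx))
        have := combine L b' c1 c2 b a hL hb'I.1 hbc1 hc1c2 hc2b hbI.2 ha H1 H2
        linarith
    · -- u does not change sign: ODE uniqueness
      obtain ⟨c, hcI, hc0⟩ := hz
      have sign : (∀ x ∈ Icc 0 L, u x ≤ 0) ∨ (∀ x ∈ Icc 0 L, 0 ≤ u x) := by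
        by_contra hno
        push_neg at hno
        obtain ⟨⟨p, hpmem, hp'⟩, ⟨q, hqmem, hq'⟩⟩ := hno
        exact hsgn ⟨⟨p, hpmem, hp'⟩, ⟨q, hqmem, hq'⟩⟩
      have hdc : deriv u c = 0 := by
        rcases eq_or_lt_of_le hcI.1 with h | h
        · rw [← h]; exact hu0
        · rcases eq_or_lt_of_le hcI.2 with h' | h'
          · rw [h']; exact huL
          · rcases sign with hs | hs
            · have : IsLocalMax u c :=
                Filter.eventually_of_mem (Icc_mem_nhds h h')
                  (fun y hy => by rw [hc0]; exact hs y hy)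
              exact this.deriv_eq_zero
            · have : IsLocalMin u c :=
                Filter.eventually_of_mem (Icc_mem_nhds h h')
                  (fun y hy => by rw [hc0]; exact hs y hy)
              exact this.deriv_eq_zero
      exact hux₀ (ode_unique L hL a u ha hu heq c hcI hc0 hdc x₀ hx₀)
  · -- no zero : Riccati argument
    push_neg at hz
    set v : ℝ → ℝ := fun x => deriv u x / u x with hv
    have hvdiff : ∀ x ∈ Icc 0 L, DifferentiableAt ℝ v x :=
      fun x hx => (hd2 x).div (hd1 x) (hz x hx)
    have hvcont : ContinuousOn v (Icc 0 L) :=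
      (h2.continuous.continuousOn).div (hu.continuous.continuousOn) hz
    have hderivv : ∀ x ∈ Icc 0 L, deriv v x = -a x - (v x)^2 := by
      intro x hx
      have hdd : deriv (deriv u) x = -(a x * u x) := by linarith [heq x hx]
      rw [hv]
      rw [show deriv (fun x => deriv u x / u x) x = deriv (deriv u / u) x from rfl, deriv_div (hd2 x) (hd1 x) (hz x hx)]
      rw [hdd]
      have hux : u x ≠ 0 := hz x hx
      field_simp
    have hvL : v L = 0 := by rw [hv]; simp [huL]
    have hv0 : v 0 = 0 := by rw [hv]; simp [hu0]
    have hcontdv : ContinuousOn (fun x => deriv v x) (Icc 0 L) := by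
      exact ContinuousOn.congr ((ha.neg).sub (hvcont.pow 2)) (fun x hx => hderivv x hx)
    have hFTC : (∫ x in (0:ℝ)..L, deriv v x) = v L - v 0 := by
      apply integral_deriv_eq_sub
      · intro x hx
        rw [uIcc_of_le hL.le] at hx
        exact hvdiff x hx
      · exact ContinuousOn.intervalIntegrable_of_Icc hL.le hcontdv
    rw [hvL, hv0, sub_zero] at hFTC
    have haint : IntervalIntegrable a MeasureTheory.volume 0 L :=
      ContinuousOn.intervalIntegrable_of_Icc hL.le ha
    have hv2int : IntervalIntegrable (fun x => (v x)^2) MeasureTheory.volume 0 L :=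
      ContinuousOn.intervalIntegrable_of_Icc hL.le (hvcont.pow 2)
    have hsplit : (∫ x in (0:ℝ)..L, deriv v x) =
        (∫ x in (0:ℝ)..L, -a x) - ∫ x in (0:ℝ)..L, (v x)^2 := by
      have hnint : IntervalIntegrable (fun x => -a x) MeasureTheory.volume 0 L :=
        ContinuousOn.intervalIntegrable_of_Icc hL.le ha.neg
      rw [← intervalIntegral.integral_sub hnint hv2int]
      apply intervalIntegral.integral_congr
      intro x hx
      rw [uIcc_of_le hL.le] at hx
      exact hderivv x hx
    rw [hFTC] at hsplit
    rw [intervalIntegral.integral_neg] at hsplit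
    have hv2le : (∫ x in (0:ℝ)..L, (v x)^2) ≤ 0 := by linarith
    have hvzero : ∀ x ∈ Icc 0 L, v x = 0 := by
      intro x hx
      by_contra hvx
      have : 0 < (v x)^2 := by positivity
      have := pos_integral (fun x => (v x)^2) 0 L hL (hvcont.pow 2)
        (fun y _ => sq_nonneg (v y)) x hx this
      linarith
    have hderiv0 : ∀ x ∈ Icc 0 L, deriv u x = 0 := by
      intro x hx
      have := hvzero x hx
      rw [hv] at this
      exact (div_eq_zero_iff.mp this).resolve_right (hz x hx)
    have hconst : ∀ x ∈ Icc 0 L, u x = u 0 := by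
      intro x hx
      have h6 : u x - u 0 = ∫ t in (0:ℝ)..x, deriv u t := (ftc1 u hu 0 x).symm
      have : (∫ t in (0:ℝ)..x, deriv u t) = 0 := by
        have heqz : (∫ t in (0:ℝ)..x, deriv u t) = ∫ t in (0:ℝ)..x, (0:ℝ) := by
          apply intervalIntegral.integral_congr
          intro t ht
          rw [uIcc_of_le hx.1] at ht
          exact hderiv0 t ⟨ht.1, le_trans ht.2 hx.2⟩
        simpa using heqz
      rw [this] at h6
      linarith
    have hu0ne : u 0 ≠ 0 := hz 0 ⟨le_rfl, hL.le⟩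
    have hIoo : ∀ x ∈ Ioo 0 L, a x = 0 := by
      intro x hx
      have hev : deriv u =ᶠ[nhds x] (fun _ => (0:ℝ)) :=
        Filter.eventually_of_mem (Icc_mem_nhds hx.1 hx.2)
          (fun y hy => hderiv0 y hy)
      have hdd : deriv (deriv u) x = 0 := by
        rw [hev.deriv_eq]; simp
      have := heq x (Ioo_subset_Icc_self hx)
      rw [hdd, zero_add] at this
      have hux : u x ≠ 0 := by
        rw [hconst x (Ioo_subset_Icc_self hx)]; exact hu0ne
      exact (mul_eq_zero.mp this).resolve_right hux
    obtain ⟨x₁, hx₁, hax₁⟩ := hane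
    exact hax₁ (eq_zero_on_Icc_of_Ioo L hL a ha hIoo x₁ hx₁)
end

section
/- Let a ∈ C[0,L] with a not identically zero, ∫₀ᴸ a(x) dx ≥ 0, a(x) ≤ π²/L² for all x ∈ [0,L], and a(x) < π²/L² on a set of positive measure. If u ∈ C²[0,L] satisfies u'' + a·u = 0 on (0,L) with u'(0) = u'(L) = 0, then u ≡ 0. -/
open Set Real intervalIntegral MeasureTheory


/-- Uniqueness for the linear IVP: if u'' = -(a u) on [0,T], u 0 = u' 0 = 0, then u ≡ 0. -/
lemma ivp_zero (T : ℝ) (a u : ℝ → ℝ)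
    (ha : ContinuousOn a (Icc 0 T))
    (hu : ContDiff ℝ 2 u)
    (heq : ∀ x ∈ Icc 0 T, deriv (deriv u) x = -(a x * u x))
    (h0 : u 0 = 0) (h0' : deriv u 0 = 0) :
    ∀ x ∈ Icc 0 T, u x = 0 := by
  have hd1 : Differentiable ℝ u := hu.differentiable two_ne_zero
  have hd2 : Differentiable ℝ (deriv u) := by
    have := (contDiff_succ_iff_deriv (n := 1)).mp (by exact_mod_cast hu)
    exact this.2.2.differentiable one_ne_zero
  -- bound on a
  obtain ⟨M, hM⟩ : ∃ M, ∀ x ∈ Icc 0 T, |a x| ≤ M := by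
    rcases le_or_gt T 0 with h | h
    · rcases lt_or_eq_of_le h with h' | h'
      · exact ⟨0, fun x hx => absurd (hx.1.trans hx.2) h'.not_ge⟩
      · exact ⟨|a 0|, fun x hx => by
          have : x = 0 := le_antisymm (h'.symm ▸ hx.2) hx.1
          simp [this]⟩
    · have := (isCompact_Icc (a := (0:ℝ)) (b := T)).exists_bound_of_continuousOn ha
      obtain ⟨C, hC⟩ := this
      exact ⟨C, fun x hx => by simpa using hC x hx⟩
  set K : ℝ := max 1 (max M 0) with hK
  have hK1 : (1:ℝ) ≤ K := le_max_left _ _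
  have hKM : M ≤ K := le_trans (le_max_left _ _) (le_max_right _ _)
  set f : ℝ → ℝ × ℝ := fun x => (u x, deriv u x) with hf
  have hfc : ContinuousOn f (Icc 0 T) :=
    (hd1.continuous.continuousOn).prodMk (hd2.continuous.continuousOn)
  have hfd : ∀ x ∈ Ico 0 T, HasDerivWithinAt f (deriv u x, deriv (deriv u) x) (Ici x) x := by
    intro x _
    exact (((hd1 x).hasDerivAt).prodMk ((hd2 x).hasDerivAt)).hasDerivWithinAt
  have key : ∀ x ∈ Icc 0 T, ‖f x‖ ≤ gronwallBound 0 K 0 (x - 0) := by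
    apply norm_le_gronwallBound_of_norm_deriv_right_le hfc hfd
    · simp [hf, h0, h0']
    · intro x hx
      have hxI : x ∈ Icc 0 T := ⟨hx.1, hx.2.le⟩
      rw [heq x hxI]
      have h1 : ‖(deriv u x, -(a x * u x))‖ = max ‖deriv u x‖ ‖a x * u x‖ := by
        simp [Prod.norm_def]
      rw [h1]
      have h2 : ‖f x‖ = max ‖u x‖ ‖deriv u x‖ := by simp [hf, Prod.norm_def]
      rw [h2, add_zero]
      have hb1 : ‖deriv u x‖ ≤ K * max ‖u x‖ ‖deriv u x‖ := by
        calc ‖deriv u x‖ ≤ max ‖u x‖ ‖deriv u x‖ := le_max_right _ _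
        _ = 1 * max ‖u x‖ ‖deriv u x‖ := (one_mul _).symm
        _ ≤ K * max ‖u x‖ ‖deriv u x‖ := by
            apply mul_le_mul_of_nonneg_right hK1 (le_max_of_le_left (norm_nonneg _))
      have hb2 : ‖a x * u x‖ ≤ K * max ‖u x‖ ‖deriv u x‖ := by
        rw [norm_mul]
        calc ‖a x‖ * ‖u x‖ ≤ K * ‖u x‖ := by
              apply mul_le_mul_of_nonneg_right _ (norm_nonneg _)
              exact le_trans (hM x hxI) hKM
        _ ≤ K * max ‖u x‖ ‖deriv u x‖ := by
              apply mul_le_mul_of_nonneg_left (le_max_left _ _) (le_trans zero_le_one hK1)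
      exact max_le hb1 hb2
  intro x hx
  have := key x hx
  rw [gronwallBound_ε0_δ0] at this
  have hfx : ‖f x‖ = 0 := le_antisymm this (norm_nonneg _)
  have : f x = 0 := norm_eq_zero.mp hfx
  have := congrArg Prod.fst this
  simpa [hf] using this


lemma eq_zero_on_closure {f : ℝ → ℝ} {s t : Set ℝ} (hf : ContinuousOn f t)
    (hs : ∀ x ∈ s, f x = 0) (hst : s ⊆ t) (hcl : t ⊆ closure s) :
    ∀ x ∈ t, f x = 0 := by
  intro x hx
  have hne : (nhdsWithin x s).NeBot := mem_closure_iff_nhdsWithin_neBot.mp (hcl hx)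
  have h1 : Filter.Tendsto f (nhdsWithin x s) (nhds (f x)) := ((hf x hx).mono hst).tendsto
  have h2 : Filter.Tendsto f (nhdsWithin x s) (nhds 0) := by
    apply Filter.Tendsto.congr' _ tendsto_const_nhds
    filter_upwards [self_mem_nhdsWithin] with y hy
    exact (hs y hy).symm
  exact tendsto_nhds_unique h1 h2

lemma zero_of_ae_zero_Ioo {f : ℝ → ℝ} {c d : ℝ} (hf : ContinuousOn f (Ioo c d))
    (h : f =ᵐ[volume.restrict (Ioc c d)] 0) :
    ∀ x ∈ Ioo c d, f x = 0 := by
  intro x hx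
  by_contra hne
  have hc : ContinuousAt f x := hf.continuousAt (Ioo_mem_nhds hx.1 hx.2)
  have hopen : {y | f y ≠ 0} ∈ nhds x := by
    have : IsOpen ({0}ᶜ : Set ℝ) := isOpen_compl_singleton
    exact hc.preimage_mem_nhds (this.mem_nhds hne)
  obtain ⟨ε, hε, hball⟩ := Metric.mem_nhds_iff.mp (Filter.inter_mem hopen (Ioo_mem_nhds hx.1 hx.2))
  have hm0 : volume.restrict (Ioc c d) {y | ¬ f y = 0} = 0 := by
    have := h
    rw [Filter.EventuallyEq, ae_iff] at this
    simpa using this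
  have hmeas : volume ({y | ¬ f y = 0} ∩ Ioc c d) = 0 := by
    rwa [Measure.restrict_apply' measurableSet_Ioc] at hm0
  have hsub : Metric.ball x ε ⊆ {y | ¬ f y = 0} ∩ Ioc c d :=
    fun y hy => ⟨(hball hy).1, Ioo_subset_Ioc_self (hball hy).2⟩
  have hpos : 0 < volume (Metric.ball x ε) := Metric.measure_ball_pos volume x hε
  exact absurd (measure_mono_null hsub hmeas) hpos.ne'

lemma riccati_case (L : ℝ) (hL : 0 < L) (a u : ℝ → ℝ)
    (ha : ContinuousOn a (Icc 0 L))
    (hu : ContDiff ℝ 2 u)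
    (heq : ∀ x ∈ Icc 0 L, deriv (deriv u) x = -(a x * u x))
    (hu0 : deriv u 0 = 0) (huL : deriv u L = 0)
    (hamean : 0 ≤ ∫ x in (0:ℝ)..L, a x)
    (hU : ∀ x ∈ Icc 0 L, u x ≠ 0) :
    ∀ x ∈ Icc 0 L, a x = 0 := by
  have hd1 : Differentiable ℝ u := hu.differentiable two_ne_zero
  have hd2 : Differentiable ℝ (deriv u) := by
    have := (contDiff_succ_iff_deriv (n := 1)).mp (by exact_mod_cast hu)
    exact this.2.2.differentiable one_ne_zero
  have huIcc : uIcc (0:ℝ) L = Icc 0 L := uIcc_of_le hL.le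
  set v : ℝ → ℝ := fun x => deriv u x / u x with hv
  set F : ℝ → ℝ := fun x => -(a x) - v x ^ 2 with hF
  have hvd : ∀ x ∈ uIcc (0:ℝ) L, HasDerivAt v (F x) x := by
    intro x hx
    rw [huIcc] at hx
    have h := ((hd2 x).hasDerivAt).div ((hd1 x).hasDerivAt) (hU x hx)
    refine h.congr_deriv ?_
    rw [heq x hx, hF, hv]
    have hux : u x ≠ 0 := hU x hx
    field_simp
  have hvc : ContinuousOn v (Icc 0 L) :=
    (hd2.continuous.continuousOn).div (hd1.continuous.continuousOn) hU
  have hFc : ContinuousOn F (Icc 0 L) := (ha.neg).sub (hvc.pow 2)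
  have hFi : IntervalIntegrable F volume 0 L :=
    (hFc.mono huIcc.subset).intervalIntegrable
  have hai : IntervalIntegrable a volume 0 L := (ha.mono huIcc.subset).intervalIntegrable
  have hv2i : IntervalIntegrable (fun x => v x ^ 2) volume 0 L :=
    ((hvc.pow 2).mono huIcc.subset).intervalIntegrable
  have hint : ∫ x in (0:ℝ)..L, F x = v L - v 0 :=
    integral_eq_sub_of_hasDerivAt hvd hFi
  have hv0 : v 0 = 0 := by simp [hv, hu0]
  have hvL : v L = 0 := by simp [hv, huL]
  rw [hv0, hvL, sub_zero] at hint
  have hsplit : ∫ x in (0:ℝ)..L, F x =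
      (∫ x in (0:ℝ)..L, -(a x)) - ∫ x in (0:ℝ)..L, v x ^ 2 :=
    integral_sub hai.neg hv2i
  rw [intervalIntegral.integral_neg] at hsplit
  have hv2nonneg : 0 ≤ ∫ x in (0:ℝ)..L, v x ^ 2 :=
    integral_nonneg hL.le (fun x _ => sq_nonneg _)
  have hv2zero : ∫ x in (0:ℝ)..L, v x ^ 2 = 0 := by
    have : ∫ x in (0:ℝ)..L, v x ^ 2 = -(∫ x in (0:ℝ)..L, a x) := by linarith [hint.symm.trans hsplit]
    linarith
  -- v^2 = 0 a.e. on Ioc 0 L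
  have hae : (fun x => v x ^ 2) =ᵐ[volume.restrict (Ioc 0 L)] 0 := by
    rw [← integral_eq_zero_iff_of_le_of_nonneg_ae hL.le _ hv2i]
    · exact hv2zero
    · filter_upwards with x using sq_nonneg _
  have hvIoo : ∀ x ∈ Ioo (0:ℝ) L, v x = 0 := by
    intro x hx
    have := zero_of_ae_zero_Ioo ((hvc.pow 2).mono Ioo_subset_Icc_self) hae x hx
    exact pow_eq_zero_iff (two_ne_zero (α := ℕ)) |>.mp this
  have hduIoo : ∀ x ∈ Ioo (0:ℝ) L, deriv u x = 0 := by
    intro x hx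
    have := hvIoo x hx
    rw [hv] at this
    exact (div_eq_zero_iff.mp this).resolve_right (hU x (Ioo_subset_Icc_self hx))
  have hduIcc : ∀ x ∈ Icc (0:ℝ) L, deriv u x = 0 :=
    eq_zero_on_closure (hd2.continuous.continuousOn) hduIoo Ioo_subset_Icc_self
      (by rw [closure_Ioo hL.ne])
  have haIoo : ∀ x ∈ Ioo (0:ℝ) L, a x = 0 := by
    intro x hx
    have hnbd : Icc (0:ℝ) L ∈ nhds x := Icc_mem_nhds hx.1 hx.2
    have hev : deriv u =ᶠ[nhds x] (fun _ => 0) := by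
      filter_upwards [hnbd] with y hy using hduIcc y hy
    have hdd : deriv (deriv u) x = 0 := by
      rw [hev.deriv_eq]
      exact deriv_const x 0
    have := heq x (Ioo_subset_Icc_self hx)
    rw [hdd] at this
    have := (neg_eq_zero.mp this.symm)
    exact (mul_eq_zero.mp this).resolve_right (hU x (Ioo_subset_Icc_self hx))
  exact eq_zero_on_closure ha haIoo Ioo_subset_Icc_self (by rw [closure_Ioo hL.ne])


lemma first_zero_lemma (L : ℝ) (hL : 0 < L) (a u : ℝ → ℝ)
    (ha : ContinuousOn a (Icc 0 L))
    (hale : ∀ x ∈ Icc 0 L, a x ≤ (π/L)^2)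
    (hu : ContDiff ℝ 2 u)
    (heq : ∀ x ∈ Icc 0 L, deriv (deriv u) x = -(a x * u x))
    (hu0 : deriv u 0 = 0)
    (c : ℝ) (hc : c ∈ Icc 0 L) (hc0 : 0 < c)
    (huc : u c = 0) (hposu : ∀ x ∈ Ico 0 c, 0 < u x) :
    L/2 ≤ c ∧ (c = L/2 → ∀ x ∈ Ioo 0 (L/2), a x = (π/L)^2) := by
  have hd1 : Differentiable ℝ u := hu.differentiable two_ne_zero
  have hd2 : Differentiable ℝ (deriv u) := by
    have := (contDiff_succ_iff_deriv (n := 1)).mp (by exact_mod_cast hu)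
    exact this.2.2.differentiable one_ne_zero
  set m : ℝ := π / L with hm
  have hmpos : 0 < m := div_pos pi_pos hL
  have hmL2 : m * (L/2) = π/2 := by field_simp [hm]; rw [hm]; exact div_mul_cancel₀ π hL.ne'
  set W : ℝ → ℝ := fun x => deriv u x * Real.cos (m*x) + u x * (m * Real.sin (m*x)) with hW
  have hcosd : ∀ x : ℝ, HasDerivAt (fun y => Real.cos (m*y)) (-(Real.sin (m*x)) * m) x := by
    intro x
    exact (Real.hasDerivAt_cos (m*x)).comp x ((hasDerivAt_id x).const_mul m |>.congr_deriv (by ring))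
  have hsind : ∀ x : ℝ, HasDerivAt (fun y => Real.sin (m*y)) (Real.cos (m*x) * m) x := by
    intro x
    exact (Real.hasDerivAt_sin (m*x)).comp x ((hasDerivAt_id x).const_mul m |>.congr_deriv (by ring))
  have hWd : ∀ x ∈ Icc 0 L, HasDerivAt W ((m^2 - a x) * (u x * Real.cos (m*x))) x := by
    intro x hx
    have h1 := ((hd2 x).hasDerivAt).mul (hcosd x)
    have h2 := ((hd1 x).hasDerivAt).mul ((hsind x).const_mul m)
    have h3 := h1.add h2
    refine h3.congr_deriv ?_
    rw [heq x hx]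
    ring
  have hWdiff : Differentiable ℝ W := by
    apply Differentiable.add
    · exact hd2.mul (fun x => (hcosd x).differentiableAt)
    · exact hd1.mul (fun x => ((hsind x).const_mul m).differentiableAt)
  have hW0 : W 0 = 0 := by simp [hW, hu0]
  -- nonnegativity of u on closure
  have hunn : ∀ x ∈ Icc 0 c, 0 ≤ u x := by
    intro x hx
    rcases eq_or_lt_of_le hx.2 with h | h
    · rw [h, huc]
    · exact (hposu x ⟨hx.1, h⟩).le
  -- key monotonicity fact, parametric in endpoint e ≤ min c (L/2)
  have hWmono : ∀ e, 0 < e → e ≤ c → e ≤ L/2 → MonotoneOn W (Icc 0 e) := by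
    intro e he0 hec heL
    have heL' : e ≤ L := heL.trans (by linarith)
    apply monotoneOn_of_deriv_nonneg (convex_Icc 0 e) (hWdiff.continuous.continuousOn)
      (hWdiff.differentiableOn)
    intro x hx
    rw [interior_Icc] at hx
    have hxIcc : x ∈ Icc 0 L := ⟨hx.1.le, (hx.2.le.trans heL')⟩
    rw [(hWd x hxIcc).deriv]
    have h1 : 0 ≤ m^2 - a x := by
      have := hale x hxIcc
      rw [hm]; nlinarith [this]
    have h2 : 0 ≤ u x := (hposu x ⟨hx.1.le, hx.2.trans_le hec⟩).le
    have h3 : 0 ≤ Real.cos (m*x) := by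
      apply Real.cos_nonneg_of_mem_Icc
      constructor
      · nlinarith [hmpos.le, hx.1.le, pi_pos.le]
      · nlinarith [hx.2.le, heL, hmpos.le, hmL2]
    positivity
  constructor
  · -- Part A : L/2 ≤ c
    by_contra hlt
    push_neg at hlt
    have hcL2 : c < L/2 := hlt
    have hcospos : ∀ x ∈ Icc 0 c, 0 < Real.cos (m*x) := by
      intro x hx
      apply Real.cos_pos_of_mem_Ioo
      constructor
      · nlinarith [hmpos.le, hx.1, pi_pos]
      · have : m * x ≤ m * c := by nlinarith [hx.2, hmpos.le]
        have : m * c < m * (L/2) := by nlinarith [hmpos]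
        nlinarith [hmL2]
    have hWnn : ∀ x ∈ Icc 0 c, 0 ≤ W x := by
      intro x hx
      have := hWmono c hc0 le_rfl hcL2.le (left_mem_Icc.mpr hc0.le) hx hx.1
      rwa [hW0] at this
    set g : ℝ → ℝ := fun x => u x / Real.cos (m*x) with hg
    have hgd : ∀ x ∈ Icc 0 c, HasDerivAt g (W x / (Real.cos (m*x))^2) x := by
      intro x hx
      have h := ((hd1 x).hasDerivAt).div (hcosd x) (hcospos x hx).ne'
      refine h.congr_deriv ?_
      rw [hW]
      ring
    have hgmono : MonotoneOn g (Icc 0 c) := by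
      apply monotoneOn_of_deriv_nonneg (convex_Icc 0 c)
      · exact fun x hx => ((hgd x hx).differentiableAt.continuousAt).continuousWithinAt
      · intro x hx
        rw [interior_Icc] at hx
        exact ((hgd x (Ioo_subset_Icc_self hx)).differentiableAt).differentiableWithinAt
      · intro x hx
        rw [interior_Icc] at hx
        rw [(hgd x (Ioo_subset_Icc_self hx)).deriv]
        have := hWnn x (Ioo_subset_Icc_self hx)
        positivity
    have h1 : g 0 ≤ g c := hgmono (left_mem_Icc.mpr hc0.le) (right_mem_Icc.mpr hc0.le) hc0.le
    have hg0 : g 0 = u 0 := by simp [hg]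
    have hgc : g c = 0 := by simp [hg, huc]
    have := hposu 0 ⟨le_rfl, hc0⟩
    rw [hg0, hgc] at h1
    linarith
  · -- Part B
    intro hceq x hx
    subst hceq
    have hWL2 : W (L/2) = 0 := by
      rw [hW]
      simp only [hmL2, Real.cos_pi_div_two, huc]
      simp [huc]
    have hWzero : ∀ y ∈ Icc 0 (L/2), W y = 0 := by
      intro y hy
      have hmono := hWmono (L/2) (by linarith) le_rfl le_rfl
      have h1 := hmono (left_mem_Icc.mpr (by linarith)) hy hy.1
      have h2 := hmono hy (right_mem_Icc.mpr (by linarith)) hy.2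
      rw [hW0] at h1; rw [hWL2] at h2
      linarith
    have hnbd : Icc (0:ℝ) (L/2) ∈ nhds x := Icc_mem_nhds hx.1 hx.2
    have hev : W =ᶠ[nhds x] (fun _ => 0) := by
      filter_upwards [hnbd] with y hy using hWzero y hy
    have hxIcc : x ∈ Icc 0 L := ⟨hx.1.le, by linarith [hx.2]⟩
    have hdW : deriv W x = 0 := by rw [hev.deriv_eq]; exact deriv_const x 0
    rw [(hWd x hxIcc).deriv] at hdW
    have hupos : 0 < u x := hposu x ⟨hx.1.le, hx.2⟩
    have hcospos : 0 < Real.cos (m*x) := by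
      apply Real.cos_pos_of_mem_Ioo
      constructor
      · nlinarith [hmpos, hx.1, pi_pos]
      · have : m * x < m * (L/2) := by nlinarith [hmpos, hx.2]
        nlinarith [hmL2]
    have : m^2 - a x = 0 := by
      rcases mul_eq_zero.mp hdW with h | h
      · exact h
      · nlinarith [hupos, hcospos]
    rw [hm] at this
    linarith

lemma pos_on_Ico {u : ℝ → ℝ} (hcont : Continuous u) {c : ℝ}
    (h0 : 0 < u 0) (hne : ∀ x ∈ Ico 0 c, u x ≠ 0) :
    ∀ x ∈ Ico 0 c, 0 < u x := by
  intro x hx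
  rcases lt_trichotomy (u x) 0 with h | h | h
  · exfalso
    have h0m : (0:ℝ) ∈ uIcc (u 0) (u x) := by
      rw [mem_uIcc]; right; exact ⟨h.le, h0.le⟩
    obtain ⟨z, hz, hz0⟩ := intermediate_value_uIcc (hcont.continuousOn (s := uIcc 0 x)) h0m
    rw [uIcc_of_le hx.1] at hz
    exact hne z ⟨hz.1, lt_of_le_of_lt hz.2 hx.2⟩ hz0
  · exact absurd h (hne x hx)
  · exact h

lemma first_zero_lemma' (L : ℝ) (hL : 0 < L) (a u : ℝ → ℝ)
    (ha : ContinuousOn a (Icc 0 L))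
    (hale : ∀ x ∈ Icc 0 L, a x ≤ (π/L)^2)
    (hu : ContDiff ℝ 2 u)
    (heq : ∀ x ∈ Icc 0 L, deriv (deriv u) x = -(a x * u x))
    (hu0 : deriv u 0 = 0)
    (c : ℝ) (hc : c ∈ Icc 0 L) (hc0 : 0 < c)
    (huc : u c = 0) (hne : ∀ x ∈ Ico 0 c, u x ≠ 0) (h00 : u 0 ≠ 0) :
    L/2 ≤ c ∧ (c = L/2 → ∀ x ∈ Ioo 0 (L/2), a x = (π/L)^2) := by
  rcases lt_or_gt_of_ne h00 with hneg | hpos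
  · -- apply to -u
    have hcont : Continuous (fun x => -u x) := (hu.differentiable two_ne_zero).continuous.neg
    have hdneg : deriv (fun x => -u x) = fun x => -(deriv u x) := by
      funext x; exact deriv.fun_neg
    have heqn : ∀ x ∈ Icc 0 L, deriv (deriv (fun x => -u x)) x = -(a x * (-u x)) := by
      intro x hx
      rw [hdneg]
      have : deriv (fun x => -(deriv u x)) x = -(deriv (deriv u) x) := deriv.fun_neg
      rw [this, heq x hx]
      ring
    have := first_zero_lemma L hL a (fun x => -u x) ha hale hu.neg heqn
      (by rw [hdneg]; simp [hu0]) c hc hc0 (by simp [huc])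
      (pos_on_Ico hcont (by simpa using hneg) (fun x hx => by simpa using hne x hx))
    exact this
  · exact first_zero_lemma L hL a u ha hale hu heq hu0 c hc hc0 huc
      (pos_on_Ico (hu.differentiable two_ne_zero).continuous hpos hne)

theorem Linfty_lyapunov_uniqueness (L : ℝ) (hL : 0 < L) (a u : ℝ → ℝ)
    (ha : ContinuousOn a (Icc 0 L))
    (hane : ∃ x ∈ Icc 0 L, a x ≠ 0)
    (hamean : 0 ≤ ∫ x in (0:ℝ)..L, a x)
    (hale : ∀ x ∈ Icc 0 L, a x ≤ π ^ 2 / L ^ 2)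
    (halt : 0 < volume {x ∈ Icc 0 L | a x < π ^ 2 / L ^ 2})
    (hu : ContDiff ℝ 2 u)
    (heq : ∀ x ∈ Icc 0 L, deriv (deriv u) x + a x * u x = 0)
    (hu0 : deriv u 0 = 0) (huL : deriv u L = 0) :
    ∀ x ∈ Icc 0 L, u x = 0 := by
  have hd1 : Differentiable ℝ u := hu.differentiable two_ne_zero
  have hd2 : Differentiable ℝ (deriv u) := by
    have := (contDiff_succ_iff_deriv (n := 1)).mp (by exact_mod_cast hu)
    exact this.2.2.differentiable one_ne_zero
  have hm2 : (π/L)^2 = π^2/L^2 := div_pow π L 2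
  have heq' : ∀ x ∈ Icc 0 L, deriv (deriv u) x = -(a x * u x) := by
    intro x hx; linarith [heq x hx]
  have hale' : ∀ x ∈ Icc 0 L, a x ≤ (π/L)^2 := by
    intro x hx; rw [hm2]; exact hale x hx
  -- Case: u never vanishes
  by_cases hvan : ∃ z ∈ Icc 0 L, u z = 0
  · obtain ⟨z, hz, huz⟩ := hvan
    -- Case: u 0 = 0
    by_cases h00 : u 0 = 0
    · exact ivp_zero L a u ha hu heq' h00 hu0
    -- reflection setup
    set U : ℝ → ℝ := fun x => u (L - x) with hUdef
    set A : ℝ → ℝ := fun x => a (L - x) with hAdef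
    have hmem : ∀ x ∈ Icc (0:ℝ) L, L - x ∈ Icc (0:ℝ) L := by
      intro x hx; exact ⟨by linarith [hx.2], by linarith [hx.1]⟩
    have hU2 : ContDiff ℝ 2 U := hu.comp (contDiff_const.sub contDiff_id)
    have hneg : ∀ x : ℝ, HasDerivAt (fun y => L - y) (-1 : ℝ) x :=
      fun x => (hasDerivAt_id x).const_sub L
    have hUderiv : deriv U = fun x => -(deriv u (L - x)) := by
      funext x
      have h : HasDerivAt U (deriv u (L - x) * -1) x :=
        ((hd1 (L - x)).hasDerivAt).comp x (hneg x)
      rw [h.deriv]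
      ring
    have hUdd : ∀ x : ℝ, deriv (deriv U) x = deriv (deriv u) (L - x) := by
      intro x
      rw [hUderiv]
      have h2 : HasDerivAt (fun y => -(deriv u (L - y)))
          (-(deriv (deriv u) (L - x) * (-1))) x :=
        (((hd2 (L - x)).hasDerivAt).comp x (hneg x)).neg
      rw [h2.deriv]
      ring
    have hAc : ContinuousOn A (Icc 0 L) :=
      ha.comp ((continuous_const.sub continuous_id).continuousOn) hmem
    have heqU : ∀ x ∈ Icc 0 L, deriv (deriv U) x = -(A x * U x) := by
      intro x hx
      rw [hUdd x]
      exact heq' (L - x) (hmem x hx)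
    have hU0' : deriv U 0 = 0 := by rw [hUderiv]; simp [huL]
    -- Case: u L = 0
    by_cases hL0 : u L = 0
    · have hUzero := ivp_zero L A U hAc hU2 heqU (by simp [hUdef, hL0]) hU0'
      intro x hx
      have := hUzero (L - x) (hmem x hx)
      simpa [hUdef] using this
    -- main case: contradiction
    exfalso
    have hUL0 : U 0 ≠ 0 := by simpa [hUdef] using hL0
    -- zero sets
    set Z : Set ℝ := {x ∈ Icc 0 L | u x = 0} with hZ
    set Z' : Set ℝ := {x ∈ Icc 0 L | U x = 0} with hZ'
    have hZne : Z.Nonempty := ⟨z, hz, huz⟩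
    have hZ'ne : Z'.Nonempty := ⟨L - z, hmem z hz, by simp [hUdef, huz]⟩
    have hZclosed : IsClosed Z := by
      have : Z = Icc 0 L ∩ u ⁻¹' {0} := by ext x; simp [hZ]
      rw [this]
      exact isClosed_Icc.inter (isClosed_singleton.preimage hd1.continuous)
    have hZ'closed : IsClosed Z' := by
      have : Z' = Icc 0 L ∩ U ⁻¹' {0} := by ext x; simp [hZ']
      rw [this]
      exact isClosed_Icc.inter (isClosed_singleton.preimage (hU2.differentiable two_ne_zero).continuous)
    have hZbdd : BddBelow Z := ⟨0, fun x hx => hx.1.1⟩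
    have hZ'bdd : BddBelow Z' := ⟨0, fun x hx => hx.1.1⟩
    set c : ℝ := sInf Z with hc
    set c' : ℝ := sInf Z' with hc'
    have hcZ : c ∈ Z := hZclosed.csInf_mem hZne hZbdd
    have hc'Z : c' ∈ Z' := hZ'closed.csInf_mem hZ'ne hZ'bdd
    have hc0 : 0 < c := by
      rcases (hcZ.1.1).lt_or_eq with h | h
      · exact h
      · exact absurd (h ▸ hcZ.2) h00
    have hc'0 : 0 < c' := by
      rcases (hc'Z.1.1).lt_or_eq with h | h
      · exact h
      · exact absurd (h ▸ hc'Z.2) hUL0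
    have hcne : ∀ x ∈ Ico 0 c, u x ≠ 0 := by
      intro x hx hux
      have : x ∈ Z := ⟨⟨hx.1, hx.2.le.trans hcZ.1.2⟩, hux⟩
      exact absurd (csInf_le hZbdd this) (not_le.mpr hx.2)
    have hc'ne : ∀ x ∈ Ico 0 c', U x ≠ 0 := by
      intro x hx hux
      have : x ∈ Z' := ⟨⟨hx.1, hx.2.le.trans hc'Z.1.2⟩, hux⟩
      exact absurd (csInf_le hZ'bdd this) (not_le.mpr hx.2)
    have hAle : ∀ x ∈ Icc 0 L, A x ≤ (π/L)^2 := fun x hx => hale' _ (hmem x hx)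
    have h1 := first_zero_lemma' L hL a u ha hale' hu heq' hu0 c hcZ.1 hc0 hcZ.2 hcne h00
    have h2 := first_zero_lemma' L hL A U hAc hAle hU2 heqU hU0' c' hc'Z.1 hc'0 hc'Z.2 hc'ne hUL0
    -- c = c' = L/2
    have hcc' : c ≤ L - c' ∧ c' ≤ L - c := by
      constructor
      · apply csInf_le hZbdd
        refine ⟨hmem c' hc'Z.1, ?_⟩
        have := hc'Z.2
        simpa [hUdef] using this
      · apply csInf_le hZ'bdd
        exact ⟨hmem c hcZ.1, by simp [hUdef, hcZ.2]⟩
    have hceq : c = L/2 := le_antisymm (by linarith [h2.1, hcc'.1]) h1.1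
    have hc'eq : c' = L/2 := le_antisymm (by linarith [h1.1, hcc'.2]) h2.1
    have ha1 := h1.2 hceq
    have ha2 := h2.2 hc'eq
    -- bad set is contained in {0, L/2, L}
    have hbad : {x ∈ Icc 0 L | a x < π^2/L^2} ⊆ ({0, L/2, L} : Set ℝ) := by
      intro x hx
      obtain ⟨hxI, hxlt⟩ := hx
      by_contra hmem3
      simp only [mem_insert_iff, mem_singleton_iff, not_or] at hmem3
      obtain ⟨hx0, hxh, hxL⟩ := hmem3
      rcases lt_trichotomy x (L/2) with h | h | h
      · have : a x = (π/L)^2 := ha1 x ⟨(hxI.1).lt_of_ne (Ne.symm hx0), h⟩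
        rw [hm2] at this
        linarith
      · exact hxh h
      · have : A (L - x) = (π/L)^2 := ha2 (L - x) ⟨by linarith [hxI.2, (hxI.2).lt_of_ne hxL], by linarith⟩
        have : a x = (π/L)^2 := by
          rw [hAdef] at this
          simpa using this
        rw [hm2] at this
        linarith
    have : volume {x ∈ Icc 0 L | a x < π^2/L^2} = 0 :=
      measure_mono_null hbad ((Set.to_countable _).measure_zero _)
    exact absurd this halt.ne'
  · push_neg at hvan
    obtain ⟨x₀, hx₀, hax₀⟩ := hane
    exact absurd (riccati_case L hL a u ha hu heq' hu0 huL hamean hvan x₀ hx₀) hax₀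
end

section
/- Let A : [0,L] → Sym(n,ℝ) be continuous with ∫₀ᴸ ⟨A(x)k,k⟩ dx ≥ 0 for all k ∈ ℝⁿ, and with no nontrivial constant solution of u'' + A u = 0, u'(0)=u'(L)=0. Let ρ(x) denote the spectral radius of A(x) and suppose ∫₀ᴸ ρ(x)⁺ dx ≤ 4/L. Then the Neumann system u'' + A(x)u = 0, u'(0)=u'(L)=0 has only the trivial C² solution. -/
open Set Matrix intervalIntegral

open MeasureTheory


lemma specnorm {n : ℕ} [Nonempty (Fin n)] (M : Matrix (Fin n) (Fin n) ℝ) (hM : M.IsHermitian) :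
    (⨆ i : Fin n, |hM.eigenvalues i|) = ‖toEuclideanCLM (𝕜 := ℝ) M‖ := by
  set T := toEuclideanCLM (𝕜 := ℝ) M with hT
  set b := hM.eigenvectorBasis with hb
  have hbA : ∀ j, T (b j) = hM.eigenvalues j • b j := by
    intro j
    have h1 := hM.mulVec_eigenvectorBasis j
    apply (WithLp.equiv 2 _).injective
    simp only [WithLp.equiv_apply, ofLp_toEuclideanCLM]
    exact h1
  have hbdd : BddAbove (Set.range fun i => |hM.eigenvalues i|) :=
    (Set.finite_range _).bddAbove
  apply le_antisymm
  · apply ciSup_le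
    intro i
    have : ‖T (b i)‖ = |hM.eigenvalues i| := by
      rw [hbA i, norm_smul, b.orthonormal.1 i, mul_one, Real.norm_eq_abs]
    calc |hM.eigenvalues i| = ‖T (b i)‖ := this.symm
      _ ≤ ‖T‖ * ‖b i‖ := T.le_opNorm _
      _ = ‖T‖ := by rw [b.orthonormal.1 i, mul_one]
  · set ρ := ⨆ i : Fin n, |hM.eigenvalues i| with hρ
    have hρ0 : 0 ≤ ρ := le_ciSup_of_le hbdd (Classical.arbitrary _) (abs_nonneg _)
    apply ContinuousLinearMap.opNorm_le_bound _ hρ0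
    intro x
    have hsym : ∀ i, (b.repr (T x)) i = hM.eigenvalues i * (b.repr x) i := by
      intro i
      have hsymm' := (isHermitian_iff_isSymmetric.1 hM)
      rw [b.repr_apply_apply, b.repr_apply_apply]
      have : (inner ℝ (b i) (T x) : ℝ) = inner ℝ (T (b i)) x := by
        have := hsymm' (b i) x
        exact this.symm
      rw [this, hbA i, real_inner_smul_left]
    have h1 : ‖T x‖ = ‖b.repr (T x)‖ := (b.repr.norm_map (T x)).symm
    have h2 : ‖x‖ = ‖b.repr x‖ := (b.repr.norm_map x).symm
    rw [h1, h2, EuclideanSpace.norm_eq, EuclideanSpace.norm_eq]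
    rw [show (ρ * Real.sqrt (∑ i, ‖(b.repr x) i‖ ^ 2)) =
      Real.sqrt (ρ^2 * ∑ i, ‖(b.repr x) i‖ ^ 2) by
        rw [Real.sqrt_mul (sq_nonneg _), Real.sqrt_sq hρ0]]
    apply Real.sqrt_le_sqrt
    rw [Finset.mul_sum]
    apply Finset.sum_le_sum
    intro i _
    rw [hsym i]
    have hle : |hM.eigenvalues i| ≤ ρ := le_ciSup hbdd i
    have : ‖hM.eigenvalues i * (b.repr x) i‖ ≤ ρ * ‖(b.repr x) i‖ := by
      rw [norm_mul]
      exact mul_le_mul_of_nonneg_right (by rwa [Real.norm_eq_abs]) (norm_nonneg _)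
    calc ‖hM.eigenvalues i * (b.repr x) i‖^2 ≤ (ρ * ‖(b.repr x) i‖)^2 := by
          apply sq_le_sq' _ this; nlinarith [norm_nonneg (hM.eigenvalues i * (b.repr x) i)]
      _ = ρ^2 * ‖(b.repr x) i‖^2 := by ring

lemma primitive_hasDerivAt {f : ℝ → ℝ} (hf : Continuous f) (a b : ℝ) :
    HasDerivAt (fun t => ∫ x in a..t, f x) (f b) b :=
  (hf.integral_hasStrictDerivAt a b).hasDerivAt

lemma cs_sq {f : ℝ → ℝ} (hf : Continuous f) {a b : ℝ} (hab : a ≤ b) :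
    (∫ x in a..b, f x)^2 ≤ (b - a) * ∫ x in a..b, (f x)^2 := by
  set F := fun t => ∫ x in a..t, f x with hF
  set Q := fun t => ∫ x in a..t, (f x)^2 with hQ
  have hf2 : Continuous fun x => (f x)^2 := hf.pow 2
  set φ := fun t => (F t)^2 - (t - a) * Q t with hφ
  have hder : ∀ t, HasDerivAt φ (2 * F t * f t - (Q t + (t - a) * (f t)^2)) t := by
    intro t
    have h1 : HasDerivAt F (f t) t := primitive_hasDerivAt hf a t
    have h2 : HasDerivAt Q ((f t)^2) t := primitive_hasDerivAt hf2 a t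
    have h3 : HasDerivAt (fun t : ℝ => t - a) 1 t := (hasDerivAt_id t).sub_const a
    have := ((h1.pow 2).sub ((h3.mul h2)))
    convert this using 1
    · rfl
    · rfl
    · rfl
    ring
  have hkey : ∀ t ∈ Icc a b, 2 * F t * f t - (Q t + (t - a) * (f t)^2) ≤ 0 := by
    intro t ht
    have hnn : 0 ≤ ∫ s in a..t, (f s - f t)^2 :=
      intervalIntegral.integral_nonneg ht.1 (fun s _ => sq_nonneg _)
    have hexp : (∫ s in a..t, (f s - f t)^2)
        = Q t - 2 * f t * F t + (t - a) * (f t)^2 := by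
      have : ∀ s, (f s - f t)^2 = (f s)^2 - (2 * f t) * f s + (f t)^2 := by intro s; ring
      simp_rw [this]
      rw [intervalIntegral.integral_add ((hf2.intervalIntegrable _ _).sub
            ((hf.intervalIntegrable _ _).const_mul _))
            (intervalIntegrable_const),
          intervalIntegral.integral_sub (hf2.intervalIntegrable _ _)
            ((hf.intervalIntegrable _ _).const_mul _),
          intervalIntegral.integral_const_mul, intervalIntegral.integral_const]
      simp only [smul_eq_mul, hQ, hF]
    nlinarith [hnn, hexp]
  have hanti : AntitoneOn φ (Icc a b) := by
    apply antitoneOn_of_deriv_nonpos (convex_Icc a b)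
    · exact fun t _ => (hder t).continuousAt.continuousWithinAt
    · exact fun t ht => (hder t).differentiableAt.differentiableWithinAt
    · intro t ht
      rw [(hder t).deriv]
      exact hkey t (interior_subset ht)
  have := hanti (left_mem_Icc.2 hab) (right_mem_Icc.2 hab) hab
  have hφa : φ a = 0 := by simp [hφ, hF, hQ]
  have hφb : φ b = (F b)^2 - (b - a) * Q b := rfl
  nlinarith [this, hφa]

lemma primitive_hasDerivAt' {f : ℝ → ℝ} (hf : Continuous f) (a b : ℝ) :
    HasDerivAt (fun t => ∫ x in a..t, f x) (f b) b :=
  (hf.integral_hasStrictDerivAt a b).hasDerivAt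

lemma primitive_continuous {f : ℝ → ℝ} (hf : Continuous f) (a : ℝ) :
    Continuous (fun t => ∫ x in a..t, f x) := by
  have : Differentiable ℝ (fun t => ∫ x in a..t, f x) :=
    fun t => (primitive_hasDerivAt' hf a t).differentiableAt
  exact this.continuous

/-- FTC product identity for primitives based at 0. -/
lemma integral_primitive_mul {f g : ℝ → ℝ} (hf : Continuous f) (hg : Continuous g) (L : ℝ) :
    ∫ y in (0:ℝ)..L, (f y * (∫ x in (0:ℝ)..y, g x) + (∫ x in (0:ℝ)..y, f x) * g y)
      = (∫ x in (0:ℝ)..L, f x) * (∫ x in (0:ℝ)..L, g x) := by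
  set F := fun t => ∫ x in (0:ℝ)..t, f x
  set G := fun t => ∫ x in (0:ℝ)..t, g x
  have hFG : ∀ t : ℝ, HasDerivAt (fun y => F y * G y) (f t * G t + F t * g t) t := by
    intro t
    exact (primitive_hasDerivAt' hf 0 t).mul (primitive_hasDerivAt' hg 0 t)
  have hint : IntervalIntegrable (fun y => f y * G y + F y * g y) volume 0 L := by
    exact ((hf.mul (primitive_continuous hg 0)).add
      ((primitive_continuous hf 0).mul hg)).intervalIntegrable _ _
  have := intervalIntegral.integral_eq_sub_of_hasDerivAt (fun t _ => hFG t) hint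
  simpa [F, G] using this

/-- ∫₀ʸ σ(x)(y-x) dx = ∫₀ʸ m where m is the primitive of σ. -/
lemma weighted_primitive {σ : ℝ → ℝ} (hσ : Continuous σ) (y : ℝ) :
    ∫ x in (0:ℝ)..y, σ x * (y - x) = ∫ t in (0:ℝ)..y, (∫ x in (0:ℝ)..t, σ x) := by
  set m := fun t => ∫ x in (0:ℝ)..t, σ x
  have hm : Continuous m := primitive_continuous hσ 0
  set ψ := fun t => m t * (y - t) + ∫ s in (0:ℝ)..t, m s with hψ
  have hder : ∀ t : ℝ, HasDerivAt ψ (σ t * (y - t)) t := by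
    intro t
    have h1 : HasDerivAt m (σ t) t := primitive_hasDerivAt' hσ 0 t
    have h2 : HasDerivAt (fun t : ℝ => y - t) (-1) t := by
      simpa using ((hasDerivAt_id t).const_sub y)
    have h3 : HasDerivAt (fun t => ∫ s in (0:ℝ)..t, m s) (m t) t :=
      primitive_hasDerivAt' hm 0 t
    have := (h1.mul h2).add h3
    convert this using 1
    · rfl
    · rfl
    · rfl
    ring
  have hint : IntervalIntegrable (fun t => σ t * (y - t)) volume 0 y :=
    (hσ.mul (by continuity)).intervalIntegrable _ _
  have := intervalIntegral.integral_eq_sub_of_hasDerivAt (fun t _ => hder t) hint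
  rw [this]
  simp [hψ, m]

lemma pos_integral_of_pos {h : ℝ → ℝ} (hc : Continuous h) {L x₀ : ℝ} (hL : 0 < L)
    (hnn : ∀ x ∈ Icc (0:ℝ) L, 0 ≤ h x) (hx₀ : x₀ ∈ Icc (0:ℝ) L) (hpos : 0 < h x₀) :
    0 < ∫ x in (0:ℝ)..L, h x := by
  obtain ⟨δ, hδ, hball⟩ := Metric.continuousAt_iff.1 hc.continuousAt (h x₀ / 2) (by linarith)
  set α := max 0 (x₀ - δ/2)
  set β := min L (x₀ + δ/2)
  have hαβ : α < β := by
    simp only [α, β, lt_min_iff, max_lt_iff]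
    constructor
    · exact ⟨hL, by nlinarith [hx₀.2]⟩
    · constructor <;> nlinarith [hx₀.1, hx₀.2]
  have hlow : ∀ x ∈ Icc α β, h x₀ / 2 ≤ h x := by
    intro x hx
    have : |x - x₀| < δ := by
      rw [abs_sub_lt_iff]
      constructor
      · have := hx.2; simp only [β, le_min_iff] at this; linarith [this.2]
      · have h1 : x₀ - δ/2 ≤ x := le_trans (le_max_right _ _) hx.1
        linarith
    have := hball (by simpa [Real.dist_eq] using this)
    rw [Real.dist_eq, abs_sub_lt_iff] at this
    linarith [this.1]
  have h0α : (0:ℝ) ≤ α := le_max_left _ _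
  have hβL : β ≤ L := min_le_left _ _
  have step1 : (β - α) * h x₀ / 2 ≤ ∫ x in α..β, h x := by
    have := intervalIntegral.integral_mono_on hαβ.le
      (_root_.intervalIntegrable_const (μ := volume) (c := h x₀ / 2)) (hc.intervalIntegrable _ _) hlow
    simpa using this
  have step2 : (∫ x in α..β, h x) ≤ ∫ x in (0:ℝ)..L, h x := by
    apply intervalIntegral.integral_mono_interval h0α hαβ.le hβL
    · filter_upwards [MeasureTheory.ae_restrict_mem measurableSet_Ioc] with x hx
      simpa using hnn x ⟨hx.1.le, hx.2⟩
    · exact hc.intervalIntegrable _ _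
  nlinarith [step1, step2, hαβ]

lemma dot_symm {n : ℕ} {M : Matrix (Fin n) (Fin n) ℝ} (hM : M.IsHermitian) (a b : Fin n → ℝ) :
    (M *ᵥ a) ⬝ᵥ b = (M *ᵥ b) ⬝ᵥ a := by
  have hMt : Mᵀ = M := by
    rw [← Matrix.conjTranspose_eq_transpose_of_trivial]; exact hM
  calc (M *ᵥ a) ⬝ᵥ b = b ⬝ᵥ (M *ᵥ a) := dotProduct_comm _ _
    _ = (b ᵥ* M) ⬝ᵥ a := Matrix.dotProduct_mulVec _ _ _
    _ = (Mᵀ *ᵥ b) ⬝ᵥ a := by rw [Matrix.mulVec_transpose]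
    _ = (M *ᵥ b) ⬝ᵥ a := by rw [hMt]

lemma quad_le {n : ℕ} (M : Matrix (Fin n) (Fin n) ℝ) (v : Fin n → ℝ) :
    (M *ᵥ v) ⬝ᵥ v ≤ ‖toEuclideanCLM (𝕜 := ℝ) M‖ * (v ⬝ᵥ v) := by
  set T := toEuclideanCLM (𝕜 := ℝ) M with hT
  set vE : EuclideanSpace ℝ (Fin n) := (WithLp.equiv 2 _).symm v with hvE
  have h1 : T vE = (WithLp.equiv 2 _).symm (M *ᵥ v) := by
    rw [hvE]
    exact toEuclideanCLM_toLp M v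
  have h2 : (M *ᵥ v) ⬝ᵥ v = (inner ℝ (T vE) vE : ℝ) := by
    rw [h1, hvE, EuclideanSpace.inner_toLp_toLp]
    simp [dotProduct_comm]
  have h3 : v ⬝ᵥ v = ‖vE‖^2 := by
    rw [← real_inner_self_eq_norm_sq, hvE, EuclideanSpace.inner_toLp_toLp]
    simp
  rw [h2, h3]
  calc (inner ℝ (T vE) vE : ℝ) ≤ ‖T vE‖ * ‖vE‖ := real_inner_le_norm _ _
    _ ≤ (‖T‖ * ‖vE‖) * ‖vE‖ :=
        mul_le_mul_of_nonneg_right (T.le_opNorm vE) (norm_nonneg _)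
    _ = ‖T‖ * ‖vE‖^2 := by ring

lemma contCLM {n : ℕ} :
    Continuous fun M : Matrix (Fin n) (Fin n) ℝ => (toEuclideanCLM (𝕜 := ℝ) M) := by
  have heq : (fun M : Matrix (Fin n) (Fin n) ℝ => toEuclideanCLM (𝕜 := ℝ) M)
      = fun M => LinearMap.toContinuousLinearMap (Matrix.toEuclideanLin M) := by
    funext M
    apply ContinuousLinearMap.coe_injective
    rw [LinearMap.coe_toContinuousLinearMap]
    exact coe_toEuclideanCLM_eq_toEuclideanLin M
  rw [heq]
  let Φ : Matrix (Fin n) (Fin n) ℝ →ₗ[ℝ]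
      (EuclideanSpace ℝ (Fin n) →L[ℝ] EuclideanSpace ℝ (Fin n)) :=
    (LinearMap.toContinuousLinearMap.toLinearMap).comp (Matrix.toEuclideanLin.toLinearMap)
  have hΦ : Continuous Φ := Φ.continuous_of_finiteDimensional
  exact hΦ
lemma hasDerivAt_comp_proj {n : ℕ} {f : ℝ → Fin n → ℝ} {f' : Fin n → ℝ} {x : ℝ}
    (h : HasDerivAt f f' x) (i : Fin n) : HasDerivAt (fun t => f t i) (f' i) x := by
  have := (ContinuousLinearMap.proj (R := ℝ) (φ := fun _ : Fin n => ℝ) i).hasFDerivAt.comp_hasDerivAt x h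
  exact (hasDerivAt_pi.1 h) i

lemma dot_eq {n : ℕ} (v w : Fin n → ℝ) : v ⬝ᵥ w = ∑ i, v i * w i := rfl


set_option maxHeartbeats 1600000 in
theorem matrix_L1_lyapunov_spectral_radius (L : ℝ) (hL : 0 < L) (n : ℕ)
    (A : ℝ → Matrix (Fin n) (Fin n) ℝ)
    (hA : ContinuousOn A (Icc 0 L))
    (hsymm : ∀ x, (A x).IsHermitian)
    (hconst : ∀ k : Fin n → ℝ, (∀ x ∈ Icc 0 L, A x *ᵥ k = 0) → k = 0)
    (hmean : ∀ k : Fin n → ℝ, 0 ≤ ∫ x in (0:ℝ)..L, (A x *ᵥ k) ⬝ᵥ k)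
    (ρ : ℝ → ℝ) (hρ : ∀ x, ρ x = ⨆ i : Fin n, |(hsymm x).eigenvalues i|)
    (hρ1 : (∫ x in (0:ℝ)..L, max (ρ x) 0) ≤ 4 / L)
    (u : ℝ → Fin n → ℝ) (hu : ContDiff ℝ 2 u)
    (heq : ∀ x ∈ Icc 0 L, deriv (deriv u) x + A x *ᵥ u x = 0)
    (hu0 : deriv u 0 = 0) (huL : deriv u L = 0) :
    ∀ x ∈ Icc 0 L, u x = 0 := by
  rcases Nat.eq_zero_or_pos n with hn | hn
  · intro x _; funext i; exact absurd i.isLt (by omega)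
  haveI : Nonempty (Fin n) := ⟨⟨0, hn⟩⟩
  -- clamped matrix function
  set B : ℝ → Matrix (Fin n) (Fin n) ℝ := fun x => A ((projIcc 0 L hL.le x : Icc (0:ℝ) L) : ℝ)
    with hBdef
  have hBeq : ∀ x ∈ Icc (0:ℝ) L, B x = A x := by
    intro x hx
    simp only [hBdef, projIcc_of_mem hL.le hx]
  have hBcont : Continuous B :=
    hA.comp_continuous (continuous_subtype_val.comp continuous_projIcc)
      (fun x => (projIcc 0 L hL.le x).2)
  have hBsymm : ∀ x, (B x).IsHermitian := fun x => hsymm _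
  set σ : ℝ → ℝ := fun x => ‖toEuclideanCLM (𝕜 := ℝ) (B x)‖ with hσdef
  have hσcont : Continuous σ := (contCLM.comp hBcont).norm
  have hσnn : ∀ x, 0 ≤ σ x := fun x => norm_nonneg _
  have hquad : ∀ (x : ℝ) (v : Fin n → ℝ), (B x *ᵥ v) ⬝ᵥ v ≤ σ x * (v ⬝ᵥ v) :=
    fun x v => quad_le _ v
  have hbudget : (∫ x in (0:ℝ)..L, σ x) ≤ 4 / L := by
    have hcg : ∀ x ∈ uIcc (0:ℝ) L, max (ρ x) 0 = σ x := by
      intro x hx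
      rw [uIcc_of_le hL.le] at hx
      have h1 : ρ x = σ x := by
        rw [hρ x]
        calc (⨆ i : Fin n, |(hsymm x).eigenvalues i|) = ‖toEuclideanCLM (𝕜 := ℝ) (A x)‖ :=
              specnorm (A x) (hsymm x)
          _ = σ x := by simp only [hσdef, hBeq x hx]
      rw [h1]
      exact max_eq_left (hσnn x)
    calc (∫ x in (0:ℝ)..L, σ x) = ∫ x in (0:ℝ)..L, max (ρ x) 0 :=
          (intervalIntegral.integral_congr hcg).symm
      _ ≤ 4 / L := hρ1
  -- derivative plumbing
  have hsucc : ContDiff ℝ ((1 : WithTop ℕ∞) + 1) u := by norm_num; exact hu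
  obtain ⟨hud, -, hu1cd⟩ := contDiff_succ_iff_deriv.mp hsucc
  set u1 := deriv u with hu1def
  set u2 := deriv u1 with hu2def
  have hu1d : Differentiable ℝ u1 := hu1cd.differentiable one_ne_zero
  have hu2c : Continuous u2 := hu1cd.continuous_deriv le_rfl
  have hu1c : Continuous u1 := hu1d.continuous
  have huc : Continuous u := hud.continuous
  have hder1 : ∀ t, HasDerivAt u1 (u2 t) t := fun t => (hu1d t).hasDerivAt
  have hderi : ∀ (i : Fin n) (t : ℝ), HasDerivAt (fun s => u s i) (u1 t i) t :=
    fun i t => hasDerivAt_comp_proj ((hud t).hasDerivAt) i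
  have hder1i : ∀ (i : Fin n) (t : ℝ), HasDerivAt (fun s => u1 s i) (u2 t i) t :=
    fun i t => hasDerivAt_comp_proj (hder1 t) i
  have huci : ∀ i : Fin n, Continuous fun s => u s i := fun i => (continuous_apply i).comp huc
  have hu1ci : ∀ i : Fin n, Continuous fun s => u1 s i := fun i => (continuous_apply i).comp hu1c
  have hu2ci : ∀ i : Fin n, Continuous fun s => u2 s i := fun i => (continuous_apply i).comp hu2c
  have hAu : ∀ x ∈ Icc (0:ℝ) L, B x *ᵥ u x = -u2 x := by
    intro x hx
    rw [hBeq x hx]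
    exact eq_neg_of_add_eq_zero_right (heq x hx)
  -- energy identity
  set sqU1 : ℝ → ℝ := fun x => u1 x ⬝ᵥ u1 x with hsqU1def
  have hsqU1c : Continuous sqU1 := hu1c.dotProduct hu1c
  have hsqU1nn : ∀ x, 0 ≤ sqU1 x := by
    intro x
    rw [hsqU1def]
    simp only [dot_eq]
    exact Finset.sum_nonneg fun i _ => mul_self_nonneg _
  set E := ∫ x in (0:ℝ)..L, sqU1 x with hEdef
  have hEnn : 0 ≤ E := intervalIntegral.integral_nonneg hL.le fun x _ => hsqU1nn x
  have hPder : ∀ t : ℝ, HasDerivAt (fun s => u1 s ⬝ᵥ u s) (u2 t ⬝ᵥ u t + sqU1 t) t := by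
    intro t
    have h : HasDerivAt (fun s => ∑ i, u1 s i * u s i)
        (∑ i, (u2 t i * u t i + u1 t i * u1 t i)) t :=
      HasDerivAt.fun_sum fun i _ => (hder1i i t).mul (hderi i t)
    have hre : (∑ i, (u2 t i * u t i + u1 t i * u1 t i)) = u2 t ⬝ᵥ u t + sqU1 t := by
      rw [Finset.sum_add_distrib, hsqU1def]
      simp only [dot_eq]
    exact hre ▸ h
  have hPint : (∫ x in (0:ℝ)..L, (u2 x ⬝ᵥ u x + sqU1 x)) = 0 := by
    rw [intervalIntegral.integral_eq_sub_of_hasDerivAt (fun t _ => hPder t)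
      (((hu2c.dotProduct huc).add hsqU1c).intervalIntegrable _ _)]
    rw [hu0, huL]
    simp [dot_eq]
  have hIdot : (∫ x in (0:ℝ)..L, u2 x ⬝ᵥ u x) = -E := by
    rw [intervalIntegral.integral_add ((hu2c.dotProduct huc).intervalIntegrable _ _)
      (hsqU1c.intervalIntegrable _ _)] at hPint
    rw [hEdef]
    linarith [hPint]
  have energy : (∫ x in (0:ℝ)..L, (B x *ᵥ u x) ⬝ᵥ u x) = E := by
    have hcg : ∀ x ∈ uIcc (0:ℝ) L, (B x *ᵥ u x) ⬝ᵥ u x = -(u2 x ⬝ᵥ u x) := by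
      intro x hx
      rw [uIcc_of_le hL.le] at hx
      rw [hAu x hx]
      simp [dot_eq, Finset.sum_neg_distrib]
    rw [intervalIntegral.integral_congr hcg, intervalIntegral.integral_neg, hIdot, neg_neg]
  have hvan : ∀ i : Fin n, (∫ x in (0:ℝ)..L, (B x *ᵥ u x) i) = 0 := by
    intro i
    have hcg : ∀ x ∈ uIcc (0:ℝ) L, (B x *ᵥ u x) i = -(u2 x i) := by
      intro x hx
      rw [uIcc_of_le hL.le] at hx
      rw [hAu x hx]
      simp
    rw [intervalIntegral.integral_congr hcg, intervalIntegral.integral_neg]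
    rw [intervalIntegral.integral_eq_sub_of_hasDerivAt (fun t _ => hder1i i t)
      ((hu2ci i).intervalIntegrable _ _)]
    rw [hu0, huL]
    simp
  -- the key inequality from hmean
  have hVI : ∀ k : Fin n → ℝ, E ≤ ∫ x in (0:ℝ)..L, σ x * ((k - u x) ⬝ᵥ (k - u x)) := by
    intro k
    have hmeanB : 0 ≤ ∫ x in (0:ℝ)..L, (B x *ᵥ k) ⬝ᵥ k := by
      have hcg : ∀ x ∈ uIcc (0:ℝ) L, (A x *ᵥ k) ⬝ᵥ k = (B x *ᵥ k) ⬝ᵥ k := by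
        intro x hx
        rw [uIcc_of_le hL.le] at hx
        rw [hBeq x hx]
      rw [← intervalIntegral.integral_congr hcg]
      exact hmean k
    have hIuk : (∫ x in (0:ℝ)..L, (B x *ᵥ u x) ⬝ᵥ k) = 0 := by
      have hh : (fun x => (B x *ᵥ u x) ⬝ᵥ k) = fun x => ∑ i, (B x *ᵥ u x) i * k i := rfl
      rw [hh, intervalIntegral.integral_finset_sum]
      · refine Finset.sum_eq_zero fun i _ => ?_
        rw [intervalIntegral.integral_mul_const, hvan i, zero_mul]
      · intro i _
        exact (((continuous_apply i).comp (hBcont.matrix_mulVec huc)).mul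
          continuous_const).intervalIntegrable _ _
    have hexp : ∀ x : ℝ, (B x *ᵥ (k - u x)) ⬝ᵥ (k - u x)
        = (B x *ᵥ k) ⬝ᵥ k - 2 * ((B x *ᵥ u x) ⬝ᵥ k) + (B x *ᵥ u x) ⬝ᵥ u x := by
      intro x
      have hs := dot_symm (hBsymm x) k (u x)
      rw [Matrix.mulVec_sub, sub_dotProduct, dotProduct_sub,
        dotProduct_sub]
      linarith [hs]
    have hc1 : Continuous fun x => (B x *ᵥ k) ⬝ᵥ k :=
      (hBcont.matrix_mulVec continuous_const).dotProduct continuous_const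
    have hc2 : Continuous fun x => (B x *ᵥ u x) ⬝ᵥ k :=
      (hBcont.matrix_mulVec huc).dotProduct continuous_const
    have hc3 : Continuous fun x => (B x *ᵥ u x) ⬝ᵥ u x :=
      (hBcont.matrix_mulVec huc).dotProduct huc
    have hkuc : Continuous fun x => k - u x := continuous_const.sub huc
    have hc4 : Continuous fun x => (B x *ᵥ (k - u x)) ⬝ᵥ (k - u x) :=
      (hBcont.matrix_mulVec hkuc).dotProduct hkuc
    have hc5 : Continuous fun x => σ x * ((k - u x) ⬝ᵥ (k - u x)) :=
      hσcont.mul (hkuc.dotProduct hkuc)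
    have hintexp : (∫ x in (0:ℝ)..L, (B x *ᵥ (k - u x)) ⬝ᵥ (k - u x))
        = (∫ x in (0:ℝ)..L, (B x *ᵥ k) ⬝ᵥ k)
          - 2 * (∫ x in (0:ℝ)..L, (B x *ᵥ u x) ⬝ᵥ k) + E := by
      simp_rw [hexp]
      rw [intervalIntegral.integral_add ((hc1.fun_sub (continuous_const.fun_mul hc2)).intervalIntegrable _ _)
          (hc3.intervalIntegrable _ _),
        intervalIntegral.integral_sub (hc1.intervalIntegrable _ _)
          ((continuous_const.fun_mul hc2).intervalIntegrable _ _),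
        intervalIntegral.integral_const_mul, energy]
    have hle : E ≤ ∫ x in (0:ℝ)..L, (B x *ᵥ (k - u x)) ⬝ᵥ (k - u x) := by
      rw [hintexp, hIuk]
      linarith [hmeanB]
    refine le_trans hle ?_
    apply intervalIntegral.integral_mono_on hL.le (hc4.intervalIntegrable _ _)
      (hc5.intervalIntegrable _ _)
    intro x _
    exact hquad x _
  -- primitives
  set m : ℝ → ℝ := fun t => ∫ x in (0:ℝ)..t, σ x with hmdef
  have hmder : ∀ t : ℝ, HasDerivAt m (σ t) t := fun t => primitive_hasDerivAt' hσcont 0 t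
  have hmc : Continuous m := primitive_continuous hσcont 0
  set Γ := m L with hΓdef
  have hΓnn : 0 ≤ Γ := intervalIntegral.integral_nonneg hL.le fun x _ => hσnn x
  have hΓL : L * Γ ≤ 4 := by
    have := (le_div_iff₀ hL).mp hbudget
    linarith [this]
  -- Cauchy-Schwarz oscillation bound
  have hCS : ∀ x y : ℝ, 0 ≤ x → x ≤ y → y ≤ L →
      (u y - u x) ⬝ᵥ (u y - u x) ≤ (y - x) * E := by
    intro x y hx hxy hyL
    have hcomp : ∀ i : Fin n, u y i - u x i = ∫ t in x..y, u1 t i := fun i =>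
      (intervalIntegral.integral_eq_sub_of_hasDerivAt (fun t _ => hderi i t)
        ((hu1ci i).intervalIntegrable _ _)).symm
    have he : (u y - u x) ⬝ᵥ (u y - u x) = ∑ i, (∫ t in x..y, u1 t i)^2 := by
      rw [dot_eq]
      exact Finset.sum_congr rfl fun i _ => by
        rw [Pi.sub_apply, hcomp i]; ring
    rw [he]
    have hsum : ∀ i ∈ Finset.univ, (∫ t in x..y, u1 t i)^2
        ≤ (y - x) * ∫ t in x..y, (u1 t i)^2 :=
      fun i _ => cs_sq (hu1ci i) hxy
    calc (∑ i, (∫ t in x..y, u1 t i)^2) ≤ ∑ i, ((y - x) * ∫ t in x..y, (u1 t i)^2) :=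
        Finset.sum_le_sum hsum
      _ = (y - x) * ∫ t in x..y, (∑ i, (u1 t i)^2) := by
        rw [← Finset.mul_sum, intervalIntegral.integral_finset_sum]
        exact fun i _ => ((hu1ci i).pow 2).intervalIntegrable _ _
      _ = (y - x) * ∫ t in x..y, sqU1 t := by
        congr 1
        apply intervalIntegral.integral_congr
        intro t _
        simp only [hsqU1def, dot_eq]
        exact Finset.sum_congr rfl fun i _ => by ring
      _ ≤ (y - x) * E := by
        apply mul_le_mul_of_nonneg_left _ (by linarith)
        apply intervalIntegral.integral_mono_interval hx hxy hyL ?_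
          (hsqU1c.intervalIntegrable _ _)
        exact Filter.Eventually.of_forall fun t => by simpa using hsqU1nn t
  -- main argument: E = 0
  have hE0 : E = 0 := by
    by_contra hEne
    have hEpos : 0 < E := lt_of_le_of_ne hEnn (Ne.symm hEne)
    rcases eq_or_lt_of_le hΓnn with hΓ0 | hΓpos
    · -- Γ = 0 case
      obtain ⟨x₀, -, hx₀⟩ := isCompact_Icc.exists_isMaxOn
        (⟨0, left_mem_Icc.2 hL.le⟩ : (Icc (0:ℝ) L).Nonempty)
        ((huc.dotProduct huc).continuousOn)
      have h1 := hVI 0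
      have hc6 : Continuous fun x => σ x * ((0 - u x) ⬝ᵥ (0 - u x)) :=
        hσcont.mul ((continuous_const.sub huc).dotProduct (continuous_const.sub huc))
      have h2 : (∫ x in (0:ℝ)..L, σ x * ((0 - u x) ⬝ᵥ (0 - u x)))
          ≤ ∫ x in (0:ℝ)..L, σ x * (u x₀ ⬝ᵥ u x₀) := by
        apply intervalIntegral.integral_mono_on hL.le (hc6.intervalIntegrable _ _)
          ((hσcont.mul continuous_const).intervalIntegrable _ _)
        intro x hx
        have hz : (0 - u x) ⬝ᵥ (0 - u x) = u x ⬝ᵥ u x := by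
          simp [dot_eq]
        rw [hz]
        exact mul_le_mul_of_nonneg_left (hx₀ hx) (hσnn x)
      rw [intervalIntegral.integral_mul_const] at h2
      have hΓeq : (∫ x in (0:ℝ)..L, σ x) = Γ := rfl
      rw [hΓeq, ← hΓ0, zero_mul] at h2
      linarith [h1, h2]
    · -- Γ > 0 : the main Lyapunov-type estimate
      set w : Fin n → ℝ := fun i => ∫ x in (0:ℝ)..L, σ x * u x i with hwdef
      have hσui : ∀ i : Fin n, Continuous fun x => σ x * u x i :=
        fun i => hσcont.mul (huci i)
      set sqU : ℝ → ℝ := fun x => u x ⬝ᵥ u x with hsqUdef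
      have hsqUc : Continuous sqU := huc.dotProduct huc
      set k0 : Fin n → ℝ := Γ⁻¹ • w with hk0def
      -- STEP A
      have hstepA : Γ * E ≤ Γ * (∫ x in (0:ℝ)..L, σ x * sqU x) - w ⬝ᵥ w := by
        have h1 := hVI k0
        have hpt : ∀ x : ℝ, σ x * ((k0 - u x) ⬝ᵥ (k0 - u x))
            = (k0 ⬝ᵥ k0) * σ x - 2 * (∑ i, k0 i * (σ x * u x i)) + σ x * sqU x := by
          intro x
          have e1 : (k0 - u x) ⬝ᵥ (k0 - u x)
              = k0 ⬝ᵥ k0 - 2 * (k0 ⬝ᵥ u x) + u x ⬝ᵥ u x := by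
            rw [sub_dotProduct, dotProduct_sub, dotProduct_sub,
              dotProduct_comm (u x) k0]
            ring
          have e2 : σ x * (k0 ⬝ᵥ u x) = ∑ i, k0 i * (σ x * u x i) := by
            rw [dot_eq, Finset.mul_sum]
            exact Finset.sum_congr rfl fun i _ => by ring
          rw [e1, ← e2]
          simp only [hsqUdef]
          ring
        have hint1 : (∫ x in (0:ℝ)..L, σ x * ((k0 - u x) ⬝ᵥ (k0 - u x)))
            = (k0 ⬝ᵥ k0) * Γ - 2 * (∑ i, k0 i * w i)
              + ∫ x in (0:ℝ)..L, σ x * sqU x := by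
          simp_rw [hpt]
          have hcA : Continuous fun x => (k0 ⬝ᵥ k0) * σ x := continuous_const.mul hσcont
          have hcB : Continuous fun x => ∑ i, k0 i * (σ x * u x i) :=
            continuous_finset_sum _ fun i _ => continuous_const.fun_mul (hσui i)
          rw [intervalIntegral.integral_add
              ((hcA.fun_sub (continuous_const.fun_mul hcB)).intervalIntegrable _ _)
              ((hσcont.fun_mul hsqUc).intervalIntegrable _ _),
            intervalIntegral.integral_sub (hcA.intervalIntegrable _ _)
              ((continuous_const.fun_mul hcB).intervalIntegrable _ _),
            intervalIntegral.integral_const_mul, intervalIntegral.integral_const_mul]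
          have hsum : (∫ x in (0:ℝ)..L, ∑ i, k0 i * (σ x * u x i)) = ∑ i, k0 i * w i := by
            rw [intervalIntegral.integral_finset_sum]
            · exact Finset.sum_congr rfl fun i _ => by
                rw [intervalIntegral.integral_const_mul]
            · exact fun i _ => (continuous_const.mul (hσui i)).intervalIntegrable _ _
          rw [hsum, show (∫ x in (0:ℝ)..L, σ x) = Γ from rfl]
        have harith : (k0 ⬝ᵥ k0) * Γ - 2 * (∑ i, k0 i * w i) = - (w ⬝ᵥ w) / Γ := by
          have e3 : k0 ⬝ᵥ k0 = Γ⁻¹ * (Γ⁻¹ * (w ⬝ᵥ w)) := by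
            rw [hk0def, smul_dotProduct, dotProduct_smul]
            simp [smul_eq_mul, mul_assoc]
          have e4 : (∑ i, k0 i * w i) = Γ⁻¹ * (w ⬝ᵥ w) := by
            rw [hk0def, dot_eq, Finset.mul_sum]
            exact Finset.sum_congr rfl fun i _ => by
              simp [smul_eq_mul, mul_assoc]
          rw [e3, e4]
          field_simp
          ring
        rw [hint1, harith] at h1
        have := mul_le_mul_of_nonneg_left h1 hΓnn
        have hΓne : Γ ≠ 0 := ne_of_gt hΓpos
        calc Γ * E ≤ Γ * (- (w ⬝ᵥ w) / Γ + ∫ x in (0:ℝ)..L, σ x * sqU x) := this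
          _ = Γ * (∫ x in (0:ℝ)..L, σ x * sqU x) - w ⬝ᵥ w := by
            field_simp
            ring
      -- primitives for the double-integral computation
      set Wi : Fin n → ℝ → ℝ := fun i t => ∫ x in (0:ℝ)..t, σ x * u x i with hWidef
      have hWic : ∀ i, Continuous (Wi i) := fun i => primitive_continuous (hσui i) 0
      set S2 : ℝ → ℝ := fun t => ∫ x in (0:ℝ)..t, σ x * sqU x with hS2def
      have hS2c : Continuous S2 := primitive_continuous (hσcont.mul hsqUc) 0
      set G : ℝ → ℝ := fun t => ∫ s in (0:ℝ)..t, m s with hGdef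
      have hGc : Continuous G := primitive_continuous hmc 0
      -- STEP B : exact double-integral identity via integration by parts
      have hT13 : (∫ y in (0:ℝ)..L, ((σ y * sqU y) * m y + S2 y * σ y))
          = (∫ x in (0:ℝ)..L, σ x * sqU x) * Γ :=
        integral_primitive_mul (hσcont.mul hsqUc) hσcont L
      have hT2 : ∀ i : Fin n,
          (∫ y in (0:ℝ)..L, ((σ y * u y i) * Wi i y + Wi i y * (σ y * u y i)))
            = w i * w i :=
        fun i => integral_primitive_mul (hσui i) (hσui i) L
      have cT13 : Continuous fun y => (σ y * sqU y) * m y + S2 y * σ y :=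
        ((hσcont.mul hsqUc).mul hmc).add (hS2c.mul hσcont)
      have cT2 : ∀ i : Fin n, Continuous fun y =>
          (σ y * u y i) * Wi i y + Wi i y * (σ y * u y i) :=
        fun i => ((hσui i).mul (hWic i)).add ((hWic i).mul (hσui i))
      have csum : Continuous fun y => ∑ i, ((σ y * u y i) * Wi i y + Wi i y * (σ y * u y i)) :=
        continuous_finset_sum _ fun i _ => cT2 i
      have hstepB : Γ * (∫ x in (0:ℝ)..L, σ x * sqU x) - w ⬝ᵥ w
          = ∫ y in (0:ℝ)..L, (((σ y * sqU y) * m y + S2 y * σ y)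
              - ∑ i, ((σ y * u y i) * Wi i y + Wi i y * (σ y * u y i))) := by
        rw [intervalIntegral.integral_sub (cT13.intervalIntegrable _ _)
            (csum.intervalIntegrable _ _), hT13,
          intervalIntegral.integral_finset_sum (fun i _ => (cT2 i).intervalIntegrable _ _)]
        have : ∀ i ∈ Finset.univ,
            (∫ y in (0:ℝ)..L, ((σ y * u y i) * Wi i y + Wi i y * (σ y * u y i)))
              = w i * w i := fun i _ => hT2 i
        rw [Finset.sum_congr rfl this, dot_eq w w]
        ring
      -- inner pointwise expansion
      have hDexp : ∀ y : ℝ, (∫ x in (0:ℝ)..y, σ x * ((u y - u x) ⬝ᵥ (u y - u x)))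
          = sqU y * m y - 2 * (∑ i, u y i * Wi i y) + S2 y := by
        intro y
        have hpt : ∀ x : ℝ, σ x * ((u y - u x) ⬝ᵥ (u y - u x))
            = sqU y * σ x - 2 * (∑ i, u y i * (σ x * u x i)) + σ x * sqU x := by
          intro x
          have e1 : (u y - u x) ⬝ᵥ (u y - u x)
              = u y ⬝ᵥ u y - 2 * (u y ⬝ᵥ u x) + u x ⬝ᵥ u x := by
            rw [sub_dotProduct, dotProduct_sub, dotProduct_sub,
              dotProduct_comm (u x) (u y)]
            ring
          have e2 : σ x * (u y ⬝ᵥ u x) = ∑ i, u y i * (σ x * u x i) := by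
            rw [dot_eq, Finset.mul_sum]
            exact Finset.sum_congr rfl fun i _ => by ring
          rw [e1, ← e2]
          simp only [hsqUdef]
          ring
        simp_rw [hpt]
        have hcA2 : Continuous fun x => sqU y * σ x := continuous_const.mul hσcont
        have hcB2 : Continuous fun x => ∑ i, u y i * (σ x * u x i) :=
          continuous_finset_sum _ fun i _ => continuous_const.fun_mul (hσui i)
        rw [intervalIntegral.integral_add
            ((hcA2.fun_sub (continuous_const.fun_mul hcB2)).intervalIntegrable _ _)
            ((hσcont.fun_mul hsqUc).intervalIntegrable _ _),
          intervalIntegral.integral_sub (hcA2.intervalIntegrable _ _)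
            ((continuous_const.fun_mul hcB2).intervalIntegrable _ _),
          intervalIntegral.integral_const_mul, intervalIntegral.integral_const_mul]
        have hsum2 : (∫ x in (0:ℝ)..y, ∑ i, u y i * (σ x * u x i)) = ∑ i, u y i * Wi i y := by
          rw [intervalIntegral.integral_finset_sum]
          · exact Finset.sum_congr rfl fun i _ => by
              rw [intervalIntegral.integral_const_mul]
          · exact fun i _ => (continuous_const.mul (hσui i)).intervalIntegrable _ _
        rw [hsum2, show (∫ x in (0:ℝ)..y, σ x) = m y from rfl,
          show (∫ x in (0:ℝ)..y, σ x * sqU x) = S2 y from rfl]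
      -- inner integral bound
      have hDle : ∀ y ∈ Icc (0:ℝ) L,
          (∫ x in (0:ℝ)..y, σ x * ((u y - u x) ⬝ᵥ (u y - u x))) ≤ E * G y := by
        intro y hy
        have hcuy : Continuous fun x => σ x * ((u y - u x) ⬝ᵥ (u y - u x)) :=
          hσcont.mul ((continuous_const.sub huc).dotProduct (continuous_const.sub huc))
        have hmono : (∫ x in (0:ℝ)..y, σ x * ((u y - u x) ⬝ᵥ (u y - u x)))
            ≤ ∫ x in (0:ℝ)..y, (σ x * (y - x)) * E := by
          apply intervalIntegral.integral_mono_on hy.1 (hcuy.intervalIntegrable _ _)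
            (((hσcont.mul (continuous_const.sub continuous_id)).mul
              continuous_const).intervalIntegrable _ _)
          intro x hx
          calc σ x * ((u y - u x) ⬝ᵥ (u y - u x)) ≤ σ x * ((y - x) * E) :=
              mul_le_mul_of_nonneg_left (hCS x y hx.1 hx.2 hy.2) (hσnn x)
            _ = (σ x * (y - x)) * E := by ring
        refine hmono.trans ?_
        rw [intervalIntegral.integral_mul_const, weighted_primitive hσcont y,
          show (∫ t in (0:ℝ)..y, ∫ x in (0:ℝ)..t, σ x) = G y from rfl, mul_comm]
      -- outer integral bound
      have houter : (∫ y in (0:ℝ)..L, (((σ y * sqU y) * m y + S2 y * σ y)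
            - ∑ i, ((σ y * u y i) * Wi i y + Wi i y * (σ y * u y i))))
          ≤ ∫ y in (0:ℝ)..L, σ y * (E * G y) := by
        apply intervalIntegral.integral_mono_on hL.le
          ((cT13.fun_sub csum).intervalIntegrable _ _)
          ((hσcont.fun_mul (continuous_const.fun_mul hGc)).intervalIntegrable _ _)
        intro y hy
        have e3 : ((σ y * sqU y) * m y + S2 y * σ y)
            - ∑ i, ((σ y * u y i) * Wi i y + Wi i y * (σ y * u y i))
            = σ y * (sqU y * m y - 2 * (∑ i, u y i * Wi i y) + S2 y) := by
          have hterm : ∀ i : Fin n, (σ y * u y i) * Wi i y + Wi i y * (σ y * u y i)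
              = σ y * (2 * (u y i * Wi i y)) := fun i => by ring
          simp_rw [hterm]
          rw [← Finset.mul_sum, ← Finset.mul_sum]
          ring
        rw [e3]
        calc σ y * (sqU y * m y - 2 * (∑ i, u y i * Wi i y) + S2 y)
            = σ y * (∫ x in (0:ℝ)..y, σ x * ((u y - u x) ⬝ᵥ (u y - u x))) := by
              rw [hDexp y]
          _ ≤ σ y * (E * G y) := mul_le_mul_of_nonneg_left (hDle y hy) (hσnn y)
      -- computing the σ-G integral
      have hσGid : (∫ y in (0:ℝ)..L, σ y * (E * G y))
          = E * (Γ * (∫ t in (0:ℝ)..L, m t) - ∫ t in (0:ℝ)..L, m t * m t) := by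
        have hid2 : (∫ y in (0:ℝ)..L, (σ y * G y + m y * m y))
            = Γ * ∫ t in (0:ℝ)..L, m t := by
          have h := integral_primitive_mul hσcont hmc L
          calc (∫ y in (0:ℝ)..L, (σ y * G y + m y * m y))
              = (∫ x in (0:ℝ)..L, σ x) * (∫ x in (0:ℝ)..L, m x) := h
            _ = Γ * ∫ t in (0:ℝ)..L, m t := by
                rw [show (∫ x in (0:ℝ)..L, σ x) = Γ from rfl]
        have hsplit : (∫ y in (0:ℝ)..L, (σ y * G y + m y * m y))
            = (∫ y in (0:ℝ)..L, σ y * G y) + ∫ y in (0:ℝ)..L, m y * m y :=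
          intervalIntegral.integral_add ((hσcont.mul hGc).intervalIntegrable _ _)
            ((hmc.mul hmc).intervalIntegrable _ _)
        have e5 : (∫ y in (0:ℝ)..L, σ y * G y)
            = Γ * (∫ t in (0:ℝ)..L, m t) - ∫ t in (0:ℝ)..L, m t * m t := by
          rw [hsplit] at hid2
          linarith [hid2]
        have hpull : (∫ y in (0:ℝ)..L, σ y * (E * G y))
            = E * ∫ y in (0:ℝ)..L, σ y * G y := by
          rw [← intervalIntegral.integral_const_mul]
          apply intervalIntegral.integral_congr
          intro y _
          ring
        rw [hpull, e5]
      -- strict quantitative bound on ∫ m (Γ - m)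
      have hIm : Γ * (∫ t in (0:ℝ)..L, m t) - (∫ t in (0:ℝ)..L, m t * m t)
          < L * Γ^2 / 4 := by
        have hm0 : m 0 = 0 := intervalIntegral.integral_same
        obtain ⟨δ', hδ'pos, hδ'⟩ := Metric.continuousAt_iff.1 hmc.continuousAt
          (Γ/8) (by linarith)
        set δ := min (δ'/2) L with hδdef
        have hδpos : 0 < δ := lt_min (by linarith) hL
        have hδL : δ ≤ L := min_le_right _ _
        have hmnn : ∀ t : ℝ, 0 ≤ t → 0 ≤ m t :=
          fun t ht => intervalIntegral.integral_nonneg ht fun s _ => hσnn s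
        have hsmall : ∀ t ∈ Icc (0:ℝ) δ, m t * Γ - m t * m t ≤ Γ^2/8 := by
          intro t ht
          have h1 : |m t - m 0| < Γ/8 := by
            have : dist t 0 < δ' := by
              rw [Real.dist_eq, sub_zero]
              rw [abs_of_nonneg ht.1]
              calc t ≤ δ := ht.2
                _ ≤ δ'/2 := min_le_left _ _
                _ < δ' := by linarith
            simpa [Real.dist_eq] using hδ' this
          rw [hm0, sub_zero] at h1
          have h2 : m t < Γ/8 := lt_of_le_of_lt (le_abs_self _) h1
          have h3 : 0 ≤ m t := hmnn t ht.1
          nlinarith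
        have hquarter : ∀ t ∈ Icc δ L, m t * Γ - m t * m t ≤ Γ^2/4 := by
          intro t _
          nlinarith [sq_nonneg (Γ - 2 * m t)]
        have hgc : Continuous fun t => m t * Γ - m t * m t :=
          (hmc.mul continuous_const).sub (hmc.mul hmc)
        have hsplitI : (∫ t in (0:ℝ)..L, (m t * Γ - m t * m t))
            = (∫ t in (0:ℝ)..δ, (m t * Γ - m t * m t))
              + ∫ t in δ..L, (m t * Γ - m t * m t) :=
          (intervalIntegral.integral_add_adjacent_intervals
            (hgc.intervalIntegrable (μ := volume) _ _) (hgc.intervalIntegrable _ _)).symm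
        have hb1 : (∫ t in (0:ℝ)..δ, (m t * Γ - m t * m t)) ≤ δ * Γ^2 / 8 := by
          have := intervalIntegral.integral_mono_on hδpos.le
            (hgc.intervalIntegrable (μ := volume) _ _)
            (_root_.intervalIntegrable_const (μ := volume) (c := Γ^2/8)) hsmall
          simpa using this
        have hb2 : (∫ t in δ..L, (m t * Γ - m t * m t)) ≤ (L - δ) * Γ^2 / 4 := by
          have := intervalIntegral.integral_mono_on hδL
            (hgc.intervalIntegrable (μ := volume) _ _)
            (_root_.intervalIntegrable_const (μ := volume) (c := Γ^2/4)) hquarter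
          simpa using this
        have hlin : Γ * (∫ t in (0:ℝ)..L, m t) - (∫ t in (0:ℝ)..L, m t * m t)
            = ∫ t in (0:ℝ)..L, (m t * Γ - m t * m t) := by
          rw [intervalIntegral.integral_sub ((hmc.fun_mul continuous_const).intervalIntegrable _ _)
            ((hmc.fun_mul hmc).intervalIntegrable _ _), intervalIntegral.integral_mul_const]
          ring
        rw [hlin, hsplitI]
        nlinarith [hb1, hb2, hδpos, hδL, hΓpos, mul_pos hδpos (mul_pos hΓpos hΓpos)]
      -- final contradiction
      have hchain : Γ * E
          ≤ E * (Γ * (∫ t in (0:ℝ)..L, m t) - ∫ t in (0:ℝ)..L, m t * m t) := by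
        calc Γ * E ≤ Γ * (∫ x in (0:ℝ)..L, σ x * sqU x) - w ⬝ᵥ w := hstepA
          _ = _ := hstepB
          _ ≤ ∫ y in (0:ℝ)..L, σ y * (E * G y) := houter
          _ = _ := hσGid
      have hlt : E * (Γ * (∫ t in (0:ℝ)..L, m t) - ∫ t in (0:ℝ)..L, m t * m t)
          < E * (L * Γ^2/4) := mul_lt_mul_of_pos_left hIm hEpos
      nlinarith [hchain, hlt, hΓL, hEpos, hΓpos, mul_nonneg hEnn hΓnn]
  -- endgame: E = 0 forces u' ≡ 0, u constant, then hconst kills it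
  have hsq0 : ∀ t ∈ Icc (0:ℝ) L, sqU1 t = 0 := by
    intro t ht
    by_contra hne
    have hpos : 0 < sqU1 t := lt_of_le_of_ne (hsqU1nn t) (Ne.symm hne)
    have h2 : (0:ℝ) < E :=
      pos_integral_of_pos hsqU1c hL (fun s _ => hsqU1nn s) ht hpos
    linarith [hE0, h2]
  have hu1zero : ∀ t ∈ Icc (0:ℝ) L, u1 t = 0 := by
    intro t ht
    funext i
    have h0 := hsq0 t ht
    simp only [hsqU1def, dot_eq] at h0
    have h1 := (Finset.sum_eq_zero_iff_of_nonneg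
      (fun j _ => mul_self_nonneg (u1 t j))).mp h0 i (Finset.mem_univ i)
    have hz : u1 t i = 0 := by nlinarith [h1]
    simpa using hz
  have hconstu : ∀ x ∈ Icc (0:ℝ) L, u x = u 0 := by
    intro x hx
    funext i
    have hfe : (∫ t in (0:ℝ)..x, u1 t i) = u x i - u 0 i :=
      intervalIntegral.integral_eq_sub_of_hasDerivAt (fun t _ => hderi i t)
        ((hu1ci i).intervalIntegrable _ _)
    have hz : (∫ t in (0:ℝ)..x, u1 t i) = 0 := by
      have hcg : ∀ t ∈ uIcc (0:ℝ) x, u1 t i = (0:ℝ) := by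
        intro t ht
        rw [uIcc_of_le hx.1] at ht
        have := hu1zero t ⟨ht.1, le_trans ht.2 hx.2⟩
        rw [this]
        rfl
      calc (∫ t in (0:ℝ)..x, u1 t i) = ∫ t in (0:ℝ)..x, (0:ℝ) :=
          intervalIntegral.integral_congr hcg
        _ = 0 := by simp
    rw [hz] at hfe
    linarith [hfe]
  have hu2zero : ∀ x ∈ Icc (0:ℝ) L, u2 x = 0 := by
    have hIoo : ∀ x ∈ Ioo (0:ℝ) L, u2 x = 0 := by
      intro x hx
      have hev : u1 =ᶠ[nhds x] (fun _ => (0 : Fin n → ℝ)) := by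
        filter_upwards [Ioo_mem_nhds hx.1 hx.2] with t ht
        exact hu1zero t (Ioo_subset_Icc_self ht)
      have hd : deriv u1 x = deriv (fun _ => (0 : Fin n → ℝ)) x := hev.deriv_eq
      rw [hu2def, hd, deriv_const]
    intro x hx
    have hclosed : IsClosed {x : ℝ | u2 x = 0} := isClosed_eq hu2c continuous_const
    have hsubset : closure (Ioo (0:ℝ) L) ⊆ {x : ℝ | u2 x = 0} :=
      closure_minimal (fun t ht => hIoo t ht) hclosed
    rw [closure_Ioo (ne_of_lt hL)] at hsubset
    exact hsubset hx
  have hAk : ∀ x ∈ Icc (0:ℝ) L, A x *ᵥ (u 0) = 0 := by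
    intro x hx
    have h := heq x hx
    rw [hu2zero x hx, zero_add, hconstu x hx] at h
    exact h
  have hu00 : u 0 = 0 := hconst (u 0) hAk
  intro x hx
  rw [hconstu x hx, hu00]
end

section
/- Let a₁₁, a₁₂, a₂₂ : Ω̄ → ℝ be continuous with a₁₁ ≥ 0, a₂₂ ≥ 0, a₁₁a₂₂ ≥ a₁₂² pointwise. Fix constants β₁, β₂ > 0 and p₁, p₂ ∈ [1,∞], and suppose ‖a₁₁‖_{p₁} < β₁ and ‖a₂₂ + a₁₂²/(β₁ − ‖a₁₁‖_{p₁})‖_{p₂} < β₂. Then there exists γ > 0 with γ < β₁ − ‖a₁₁‖_{p₁} and (1/γ − 1/(β₁ − ‖a₁₁‖_{p₁}))·‖a₁₂²‖_{p₂} < β₂ − ‖a₂₂ + a₁₂²/(β₁ − ‖a₁₁‖_{p₁})‖_{p₂}, and for this γ the diagonal matrix B(x) = diag(a₁₁(x)+γ, a₂₂(x)+a₁₂(x)²/γ) satisfies A(x) ≤ B(x) for all x, where A(x) = [[a₁₁(x),a₁₂(x)],[a₁₂(x),a₂₂(x)]]. -/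
open Set Matrix MeasureTheory ENNReal

theorem exists_gamma_diag_bound (N : ℕ) (Ω : Set (EuclideanSpace ℝ (Fin N)))
    (hΩ : IsCompact Ω)
    (a11 a12 a22 : EuclideanSpace ℝ (Fin N) → ℝ)
    (h11c : ContinuousOn a11 Ω) (h12c : ContinuousOn a12 Ω) (h22c : ContinuousOn a22 Ω)
    (h11 : ∀ x ∈ Ω, 0 ≤ a11 x) (h22 : ∀ x ∈ Ω, 0 ≤ a22 x)
    (hdet : ∀ x ∈ Ω, a12 x ^ 2 ≤ a11 x * a22 x)
    (β₁ β₂ : ℝ) (hβ₁ : 0 < β₁) (hβ₂ : 0 < β₂)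
    (p₁ p₂ : ℝ≥0∞) (hp₁ : 1 ≤ p₁) (hp₂ : 1 ≤ p₂)
    (n1 : ℝ) (hn1 : eLpNorm a11 p₁ (volume.restrict Ω) = ENNReal.ofReal n1) (hn1' : 0 ≤ n1)
    (n2 : ℝ)
    (hn2 : eLpNorm (fun x => a22 x + a12 x ^ 2 / (β₁ - n1)) p₂ (volume.restrict Ω)
        = ENNReal.ofReal n2) (hn2' : 0 ≤ n2)
    (m : ℝ) (hm : eLpNorm (fun x => a12 x ^ 2) p₂ (volume.restrict Ω) = ENNReal.ofReal m)
    (hm' : 0 ≤ m)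
    (hN1 : n1 < β₁) (hN2 : n2 < β₂) :
    ∃ γ : ℝ, 0 < γ ∧ γ < β₁ - n1 ∧
      (1 / γ - 1 / (β₁ - n1)) * m < β₂ - n2 ∧
      ∀ x ∈ Ω,
        (Matrix.diagonal ![a11 x + γ, a22 x + a12 x ^ 2 / γ] -
          !![a11 x, a12 x; a12 x, a22 x]).PosSemidef := by
  set δ := β₁ - n1 with hδdef
  have hδ : 0 < δ := by simp [hδdef]; linarith
  have hε : 0 < β₂ - n2 := by linarith
  set ε := β₂ - n2 with hεdef
  have hm1 : (0:ℝ) < m + 1 := by linarith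
  have hden : 0 < 1 / δ + ε / (2 * (m + 1)) := by positivity
  refine ⟨(1 / δ + ε / (2 * (m + 1)))⁻¹, inv_pos.mpr hden, ?_, ?_, ?_⟩
  · rw [inv_lt_comm₀ hden hδ, ← one_div]
    have : 0 < ε / (2 * (m + 1)) := by positivity
    linarith
  · have h1 : 1 / (1 / δ + ε / (2 * (m + 1)))⁻¹ = 1 / δ + ε / (2 * (m + 1)) := by
      rw [one_div, inv_inv]
    rw [h1]
    have : (ε / (2 * (m + 1))) * m < ε := by
      rw [div_mul_eq_mul_div, div_lt_iff₀ (by positivity)]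
      nlinarith
    linarith [this]
  · intro x hx
    set γ := (1 / δ + ε / (2 * (m + 1)))⁻¹ with hγdef
    have hγ : 0 < γ := inv_pos.mpr hden
    have hM : Matrix.diagonal ![a11 x + γ, a22 x + a12 x ^ 2 / γ] -
        !![a11 x, a12 x; a12 x, a22 x] = !![γ, -a12 x; -a12 x, a12 x ^ 2 / γ] := by
      ext i j
      fin_cases i <;> fin_cases j <;>
        simp [Matrix.sub_apply, Matrix.diagonal_apply]
    rw [hM]
    rw [Matrix.posSemidef_iff_dotProduct_mulVec]
    constructor
    · ext i j
      fin_cases i <;> fin_cases j <;> simp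
    · intro v
      have hq : star v ⬝ᵥ (!![γ, -a12 x; -a12 x, a12 x ^ 2 / γ] *ᵥ v)
          = γ * v 0 ^ 2 - 2 * a12 x * v 0 * v 1 + a12 x ^ 2 / γ * v 1 ^ 2 := by
        simp [Matrix.mulVec, dotProduct, Fin.sum_univ_two]
        ring
      rw [hq]
      have key : γ * (γ * v 0 ^ 2 - 2 * a12 x * v 0 * v 1 + a12 x ^ 2 / γ * v 1 ^ 2)
          = (γ * v 0 - a12 x * v 1) ^ 2 := by
        field_simp
        ring
      nlinarith [sq_nonneg (γ * v 0 - a12 x * v 1), hγ, key]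
end
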